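/- arXiv:1506.00350 — 5 statements merged into one kernel-verified Lean document; each statement's English description precedes it below -/
import Mathlib

section
/- Let φ(x) = ∑_{n≥0} αₙ xⁿ be a formal power series with real coefficients such that α₀ ≠ 0, 2α₂α₀ − α₁² ≥ 0, and there exists n ≥ 2 with n!·αₙ·α₀^{n−1} ≠ α₁ⁿ (i.e., φ is not of the form c·e^{γx} with c ≠ 0). Set p = min{n ≥ 2 : n!·αₙ·α₀^{n−1} ≠ α₁ⁿ}. If f is a real polynomial with deg f ≥ p, then there is a positive integer m₀ such that for all m ≥ m₀ the polynomial φ(D)^m f has at least one nonreal complex zero. -/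
open Polynomial Nat

/-- `φ(D)f = ∑ₙ αₙ f⁽ⁿ⁾` (a finite sum). -/
noncomputable def phiD (α : ℕ → ℝ) (f : Polynomial ℝ) : Polynomial ℝ :=
  ∑ n ∈ Finset.range (f.natDegree + 1), α n • (Polynomial.derivative^[n] f)

section Aux

open Finset

lemma aux_esymm_cons (a : ℝ) (s : Multiset ℝ) (n : ℕ) :
    (a ::ₘ s).esymm (n+1) = a * s.esymm n + s.esymm (n+1) := by
  rw [Multiset.esymm, Multiset.powersetCard_cons, Multiset.map_add, Multiset.sum_add,
    Multiset.map_map, Multiset.esymm, Multiset.esymm]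
  rw [add_comm]
  congr 1
  rw [← Multiset.sum_map_mul_left]
  apply congrArg
  apply Multiset.map_congr rfl
  intro t _
  simp [Multiset.prod_cons]

lemma aux_esymm_one (s : Multiset ℝ) : s.esymm 1 = s.sum := by
  rw [Multiset.esymm, Multiset.powersetCard_one, Multiset.map_map]
  simp

lemma aux_sq_sum_eq (t : Multiset ℝ) :
    t.sum ^ 2 = (t.map (fun r => r^2)).sum + 2 * t.esymm 2 := by
  induction t using Multiset.induction with
  | empty => simp [Multiset.esymm, Multiset.powersetCard_zero_right 1]
  | cons a s ih =>
    rw [Multiset.sum_cons, Multiset.map_cons, Multiset.sum_cons,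
      show (2:ℕ) = 1 + 1 from rfl, aux_esymm_cons, aux_esymm_one, add_sq, ih]
    ring

lemma aux_esymm_map_hom (f : ℝ →+* ℂ) (s : Multiset ℝ) (n : ℕ) :
    (s.map f).esymm n = f (s.esymm n) := by
  rw [Multiset.esymm, Multiset.esymm, Multiset.powersetCard_map, Multiset.map_map]
  rw [map_multiset_sum, Multiset.map_map]
  apply congrArg
  apply Multiset.map_congr rfl
  intro t ht
  simp [map_multiset_prod]

lemma aux_taylor_eq_sum_hasse (r : ℝ) (g : ℝ[X]) (N : ℕ) (hN : g.natDegree ≤ N) :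
    Polynomial.taylor r g = ∑ n ∈ Finset.range (N+1), r^n • hasseDeriv n g := by
  conv_lhs => rw [g.as_sum_range' (N+1) (by omega)]
  rw [map_sum]
  have key : ∀ n, r^n • hasseDeriv n g
      = ∑ i ∈ range (N+1), r^n • hasseDeriv n (monomial i (g.coeff i)) := by
    intro n
    rw [← Finset.smul_sum, ← map_sum, ← g.as_sum_range' (N+1) (by omega)]
  rw [Finset.sum_congr rfl (fun n _ => key n), Finset.sum_comm]
  apply Finset.sum_congr rfl
  intro i hi
  rw [taylor_monomial]
  have hsub : ∀ n ∈ range (N+1), n ∉ range (i+1) →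
      r^n • hasseDeriv n (monomial i (g.coeff i)) = 0 := by
    intro n _ hn
    simp only [Finset.mem_range, not_lt] at hn
    rw [hasseDeriv_monomial, Nat.choose_eq_zero_of_lt (by omega)]
    simp
  rw [← Finset.sum_subset (Finset.range_subset_range.mpr
    (by simp only [Finset.mem_range] at hi; omega)) hsub]
  simp only [hasseDeriv_monomial]
  rw [← Finset.sum_range_reflect]
  rw [(Commute.all X (C r)).add_pow, Finset.mul_sum]
  apply Finset.sum_congr rfl
  intro n hn
  simp only [Finset.mem_range] at hn
  have h1 : i + 1 - 1 - n = i - n := by omega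
  have h2 : i - (i - n) = n := by omega
  have h3 : i.choose (i - n) = i.choose n := Nat.choose_symm (by omega)
  rw [h1, h2, h3, smul_monomial]
  rw [show ∀ c : ℝ, monomial n c = C c * X^n from fun c => (C_mul_X_pow_eq_monomial).symm]
  simp only [smul_eq_mul, map_mul, map_pow, ← C_eq_natCast]
  ring

lemma aux_taylor_eq_sum_smul (r : ℝ) (g : ℝ[X]) (N : ℕ) (hN : g.natDegree ≤ N) :
    Polynomial.taylor r g
      = ∑ n ∈ Finset.range (N+1), (r^n / n !) • Polynomial.derivative^[n] g := by
  rw [aux_taylor_eq_sum_hasse r g N hN]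
  apply Finset.sum_congr rfl
  intro n _
  have h : Polynomial.derivative^[n] g = (n ! • hasseDeriv n (R := ℝ)) g := by
    rw [Polynomial.factorial_smul_hasseDeriv]
  rw [h]
  simp only [LinearMap.smul_apply, ← Nat.cast_smul_eq_nsmul ℝ, smul_smul]
  congr 1
  field_simp

lemma aux_phiD_eq_sum (α : ℕ → ℝ) (g : ℝ[X]) (N : ℕ) (hN : g.natDegree ≤ N) :
    phiD α g = ∑ n ∈ Finset.range (N+1), α n • Polynomial.derivative^[n] g := by
  rw [phiD]
  apply Finset.sum_subset (Finset.range_subset_range.mpr (by omega))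
  intro n _ hn
  simp only [Finset.mem_range, not_lt] at hn
  rw [Polynomial.iterate_derivative_eq_zero (by omega), smul_zero]

lemma aux_iterate_derivative_taylor (r : ℝ) (g : ℝ[X]) (n : ℕ) :
    Polynomial.derivative^[n] (Polynomial.taylor r g)
      = Polynomial.taylor r (Polynomial.derivative^[n] g) := by
  induction n with
  | zero => rfl
  | succ n ih =>
    rw [Function.iterate_succ_apply', ih, Function.iterate_succ_apply']
    rw [Polynomial.taylor_apply, Polynomial.taylor_apply, Polynomial.derivative_comp]
    simp

lemma aux_phiD_taylor (α : ℕ → ℝ) (r : ℝ) (g : ℝ[X]) :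
    phiD α (Polynomial.taylor r g) = Polynomial.taylor r (phiD α g) := by
  rw [aux_phiD_eq_sum α _ g.natDegree (by rw [Polynomial.natDegree_taylor]), phiD, map_sum]
  apply Finset.sum_congr rfl
  intro n _
  rw [LinearMap.map_smul, aux_iterate_derivative_taylor]

lemma aux_taylor_coeff_of_natDegree_le (r : ℝ) (h : ℝ[X]) (n : ℕ) (hn : h.natDegree ≤ n) :
    (Polynomial.taylor r h).coeff n = h.coeff n := by
  rw [taylor_coeff]
  have h0 : (hasseDeriv n h).natDegree = 0 :=
    Nat.le_zero.mp ((natDegree_hasseDeriv_le h n).trans (by omega))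
  rw [eq_C_of_natDegree_le_zero h0.le, eval_C, hasseDeriv_coeff]
  simp

lemma aux_step (α : ℕ → ℝ) (h0 : α 0 ≠ 0) (p : ℕ)
    (hα : ∀ n, n < p → α n = α 0 * (α 1 / α 0)^n / n !)
    (d : ℕ) (hd : p ≤ d) (g : ℝ[X]) (hg : g.natDegree ≤ d) :
    ∃ e : ℝ[X], e.natDegree ≤ d - p ∧
      phiD α (Polynomial.taylor (-(α 1 / α 0)) g) = α 0 • g + e ∧
      e.coeff (d - p) = (α p - α 0 * (α 1 / α 0)^p / p !) * (d.descFactorial p) * g.coeff d := by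
  set β := α 1 / α 0 with hβ
  set E : ℝ[X] := ∑ n ∈ Finset.range (d+1),
    (α n - α 0 * β^n / n !) • Polynomial.derivative^[n] g with hE
  have hzero : ∀ n, n < p → α n - α 0 * β^n / n ! = 0 := fun n hn => by rw [hα n hn]; ring
  have hE_deg : E.natDegree ≤ d - p := by
    apply Polynomial.natDegree_sum_le_of_forall_le
    intro n hn
    rcases lt_or_ge n p with h | h
    · rw [hzero n h, zero_smul]; simp
    · refine (Polynomial.natDegree_smul_le _ _).trans ?_
      refine (Polynomial.natDegree_iterate_derivative g n).trans (by omega)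
  have hE_coeff : E.coeff (d - p)
      = (α p - α 0 * β^p / p !) * (d.descFactorial p) * g.coeff d := by
    rw [hE, Polynomial.finset_sum_coeff]
    rw [Finset.sum_eq_single p]
    · rw [Polynomial.coeff_smul, Polynomial.coeff_iterate_derivative,
        Nat.sub_add_cancel hd, smul_eq_mul, nsmul_eq_mul]
      ring
    · intro n hn hne
      rcases lt_or_ge n p with h | h
      · rw [hzero n h, zero_smul, Polynomial.coeff_zero]
      · rw [Polynomial.coeff_smul, Polynomial.coeff_iterate_derivative,
          Polynomial.coeff_eq_zero_of_natDegree_lt (by omega), smul_zero, smul_zero]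
    · intro h
      exact absurd (Finset.mem_range.mpr (by omega)) h
  refine ⟨Polynomial.taylor (-β) E, by rwa [Polynomial.natDegree_taylor], ?_, ?_⟩
  · rw [aux_phiD_eq_sum α _ d (by rwa [Polynomial.natDegree_taylor])]
    have h1 : ∀ n ∈ Finset.range (d+1),
        α n • Polynomial.derivative^[n] (Polynomial.taylor (-β) g)
        = Polynomial.taylor (-β) ((α 0 * (β^n / n !)) • Polynomial.derivative^[n] g
            + (α n - α 0 * β^n / n !) • Polynomial.derivative^[n] g) := by
      intro n _
      rw [map_add, LinearMap.map_smul, LinearMap.map_smul, aux_iterate_derivative_taylor,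
        ← add_smul]
      congr 1
      ring
    rw [Finset.sum_congr rfl h1, ← map_sum, Finset.sum_add_distrib]
    have h2 : ∑ n ∈ Finset.range (d+1), (α 0 * (β^n / n !)) • Polynomial.derivative^[n] g
        = α 0 • Polynomial.taylor β g := by
      rw [aux_taylor_eq_sum_smul β g d hg, Finset.smul_sum]
      exact Finset.sum_congr rfl fun n _ => by rw [smul_smul]
    rw [h2, map_add, LinearMap.map_smul, Polynomial.taylor_taylor, neg_add_cancel,
      Polynomial.taylor_zero]
  · rw [aux_taylor_coeff_of_natDegree_le _ _ _ hE_deg, hE_coeff]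

lemma aux_iter_coeffs (α : ℕ → ℝ) (h0 : α 0 ≠ 0) (p : ℕ) (hp2 : 2 ≤ p)
    (hα : ∀ n, n < p → α n = α 0 * (α 1 / α 0)^n / n !)
    (f : ℝ[X]) (hd : p ≤ f.natDegree) (m : ℕ) :
    (Polynomial.taylor (-(m:ℝ) * (α 1 / α 0)) ((phiD α)^[m] f)).natDegree ≤ f.natDegree ∧
    (Polynomial.taylor (-(m:ℝ) * (α 1 / α 0)) ((phiD α)^[m] f)).coeff f.natDegree
      = (α 0)^m * f.coeff f.natDegree ∧
    (∀ k, 0 < k → k < p →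
      (Polynomial.taylor (-(m:ℝ) * (α 1 / α 0)) ((phiD α)^[m] f)).coeff (f.natDegree - k)
        = (α 0)^m * f.coeff (f.natDegree - k)) ∧
    (Polynomial.taylor (-(m:ℝ) * (α 1 / α 0)) ((phiD α)^[m] f)).coeff (f.natDegree - p)
      = (α 0)^m * (f.coeff (f.natDegree - p)
          + m * ((α p - α 0 * (α 1 / α 0)^p / p !) * ((f.natDegree).descFactorial p) / α 0)
            * f.coeff f.natDegree) := by
  set β := α 1 / α 0 with hβ
  set d := f.natDegree with hdd
  set γ := (α p - α 0 * β^p / p !) * (d.descFactorial p) / α 0 with hγ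
  induction m with
  | zero => simp [hdd]
  | succ m ih =>
    obtain ⟨ih1, ih2, ih3, ih4⟩ := ih
    set G := Polynomial.taylor (-(m:ℝ) * β) ((phiD α)^[m] f) with hG
    have hGsucc : Polynomial.taylor (-((m+1:ℕ):ℝ) * β) ((phiD α)^[m+1] f)
        = phiD α (Polynomial.taylor (-β) G) := by
      rw [hG, Polynomial.taylor_taylor, aux_phiD_taylor, Function.iterate_succ_apply']
      congr 2
      push_cast
      ring
    obtain ⟨e, he_deg, he_eq, he_coeff⟩ := aux_step α h0 p hα d hd G ih1
    rw [hGsucc, he_eq]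
    have hlt : ∀ i, d - p < i → e.coeff i = 0 := fun i hi =>
      Polynomial.coeff_eq_zero_of_natDegree_lt (by omega)
    refine ⟨?_, ?_, ?_, ?_⟩
    · refine (Polynomial.natDegree_add_le _ _).trans (max_le ?_ (by omega))
      exact (Polynomial.natDegree_smul_le _ _).trans ih1
    · rw [Polynomial.coeff_add, Polynomial.coeff_smul, ih2, hlt d (by omega),
        smul_eq_mul, add_zero, pow_succ]
      ring
    · intro k hk0 hkp
      rw [Polynomial.coeff_add, Polynomial.coeff_smul, ih3 k hk0 hkp,
        hlt (d - k) (by omega), smul_eq_mul, add_zero, pow_succ]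
      ring
    · rw [Polynomial.coeff_add, Polynomial.coeff_smul, ih4, he_coeff, ih2, smul_eq_mul, ← hβ]
      rw [hγ]
      push_cast
      field_simp
      ring

lemma aux_exists_real_roots_esymm (G : ℝ[X]) (hG : G ≠ 0)
    (hreal : ∀ z ∈ (G.map (algebraMap ℝ ℂ)).roots, z.im = 0) :
    ∃ M : Multiset ℝ, Multiset.card M = G.natDegree ∧
      ∀ k, k ≤ G.natDegree →
        G.coeff (G.natDegree - k) = G.coeff G.natDegree * ((-1)^k * M.esymm k) := by
  set P := G.map (algebraMap ℝ ℂ) with hP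
  have hsplit : Splits (G.map (algebraMap ℝ ℂ)) := IsAlgClosed.splits _
  have hinj : Function.Injective (algebraMap ℝ ℂ) := (algebraMap ℝ ℂ).injective
  have hPdeg : P.natDegree = G.natDegree := Polynomial.natDegree_map_eq_of_injective hinj G
  have hcard : Multiset.card P.roots = G.natDegree :=
    by rw [← hPdeg]; exact hsplit.natDegree_eq_card_roots.symm
  have hvieta : C P.leadingCoeff * (P.roots.map fun z => X - C z).prod = P :=
    Polynomial.C_leadingCoeff_mul_prod_multiset_X_sub_C (by rw [hcard, hPdeg])
  set M : Multiset ℝ := P.roots.map Complex.re with hM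
  have hMc : M.map (Complex.ofRealHom) = P.roots := by
    rw [hM, Multiset.map_map]
    have h : ∀ z ∈ P.roots, (Complex.ofRealHom ∘ Complex.re) z = id z := by
      intro z hz
      apply Complex.ext
      · simp
      · simp [hreal z hz]
    rw [Multiset.map_congr rfl h, Multiset.map_id]
  refine ⟨M, by rw [hM, Multiset.card_map, hcard], ?_⟩
  intro k hk
  have hL : P.leadingCoeff = (algebraMap ℝ ℂ) (G.coeff G.natDegree) := by
    rw [Polynomial.leadingCoeff, hPdeg, hP, Polynomial.coeff_map]
  have hcoeff : P.coeff (G.natDegree - k) = (algebraMap ℝ ℂ) (G.coeff (G.natDegree - k)) := by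
    rw [hP, Polynomial.coeff_map]
  have h1 : P.coeff (G.natDegree - k)
      = P.leadingCoeff * ((-1)^k * (P.roots.esymm k)) := by
    conv_lhs => rw [← hvieta]
    rw [Polynomial.coeff_C_mul, Multiset.prod_X_sub_C_coeff _
      (by omega : G.natDegree - k ≤ Multiset.card P.roots)]
    rw [hcard]
    congr 2 <;> rw [Nat.sub_sub_self hk]
  have h2 : P.roots.esymm k = (algebraMap ℝ ℂ) (M.esymm k) := by
    rw [← hMc, aux_esymm_map_hom Complex.ofRealHom]
    rfl
  apply hinj
  rw [hcoeff.symm, h1, h2, hL]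
  push_cast
  ring

lemma aux_abs_prod_le (t : Multiset ℝ) (B : ℝ) (hB : 0 ≤ B) (h : ∀ r ∈ t, |r| ≤ B) :
    |t.prod| ≤ B ^ (Multiset.card t) := by
  induction t using Multiset.induction with
  | empty => simp
  | cons a s ih =>
    simp only [Multiset.prod_cons, Multiset.card_cons, abs_mul, pow_succ]
    have ha := h a (Multiset.mem_cons_self a s)
    calc |a| * |s.prod| ≤ B * B ^ Multiset.card s := by
          apply mul_le_mul ha (ih (fun r hr => h r (Multiset.mem_cons_of_mem hr)))
            (abs_nonneg _) hB
    _ = B ^ Multiset.card s * B := mul_comm _ _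

lemma aux_esymm_abs_bound (M : Multiset ℝ) (p : ℕ) (B : ℝ) (hB : 0 ≤ B)
    (h : ∀ r ∈ M, |r| ≤ B) :
    |M.esymm p| ≤ ((Multiset.card M).choose p : ℝ) * B ^ p := by
  rw [Multiset.esymm]
  refine (Multiset.abs_sum_le_sum_abs).trans ?_
  rw [Multiset.map_map]
  have hcard : Multiset.card ((M.powersetCard p).map fun t => |t.prod|)
      = (Multiset.card M).choose p := by
    rw [Multiset.card_map, Multiset.card_powersetCard]
  calc ((M.powersetCard p).map fun x => |(Multiset.prod x)|).sum
      ≤ Multiset.card ((M.powersetCard p).map fun t => |t.prod|) • (B ^ p) := by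
        apply Multiset.sum_le_card_nsmul
        intro x hx
        obtain ⟨t, ht, rfl⟩ := Multiset.mem_map.mp hx
        obtain ⟨hle, hcardt⟩ := Multiset.mem_powersetCard.mp ht
        have := aux_abs_prod_le t B hB (fun r hr => h r (Multiset.mem_of_le hle hr))
        rwa [hcardt] at this
    _ = ((Multiset.card M).choose p : ℝ) * B ^ p := by
        rw [hcard, nsmul_eq_mul]

lemma aux_roots_taylor_real (g : ℝ[X]) (hg : g ≠ 0) (c : ℝ)
    (h : ∀ z ∈ (g.map (algebraMap ℝ ℂ)).roots, z.im = 0) :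
    ∀ z ∈ ((Polynomial.taylor c g).map (algebraMap ℝ ℂ)).roots, z.im = 0 := by
  intro z hz
  rw [Polynomial.mem_roots', Polynomial.taylor_apply, Polynomial.map_comp, Polynomial.IsRoot,
    Polynomial.eval_comp] at hz
  have hz2 := hz.2
  simp only [Polynomial.map_add, Polynomial.map_X, Polynomial.map_C, Polynomial.eval_add,
    Polynomial.eval_X, Polynomial.eval_C] at hz2
  have hgm : g.map (algebraMap ℝ ℂ) ≠ 0 := by
    rwa [Ne, Polynomial.map_eq_zero_iff (algebraMap ℝ ℂ).injective]
  have hmem : z + (algebraMap ℝ ℂ) c ∈ (g.map (algebraMap ℝ ℂ)).roots := by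
    rw [Polynomial.mem_roots']
    exact ⟨hgm, hz2⟩
  have := h _ hmem
  simpa using this

end Aux

/-- If `α₀ ≠ 0`, `2α₂α₀ − α₁² ≥ 0`, `φ` is not of the form `c·e^{γx}` (witnessed by
`p = min{n ≥ 2 : n!·αₙ·α₀^{n−1} ≠ α₁ⁿ}`), and `deg f ≥ p`, then eventually
`φ(D)^m f` has a nonreal zero. -/
theorem stmt1 (α : ℕ → ℝ) (h0 : α 0 ≠ 0)
    (h2 : 0 ≤ 2 * α 2 * α 0 - (α 1) ^ 2)
    (p : ℕ) (hp2 : 2 ≤ p)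
    (hpne : (p ! : ℝ) * α p * α 0 ^ (p - 1) ≠ (α 1) ^ p)
    (hpmin : ∀ n, 2 ≤ n → n < p → (n ! : ℝ) * α n * α 0 ^ (n - 1) = (α 1) ^ n)
    (f : Polynomial ℝ) (hdeg : p ≤ f.natDegree) :
    ∃ m₀ : ℕ, 0 < m₀ ∧ ∀ m ≥ m₀,
      ∃ z ∈ (((phiD α)^[m] f).map (algebraMap ℝ ℂ)).roots, z.im ≠ 0 := by
  set β := α 1 / α 0 with hβ
  set d := f.natDegree with hdd
  set a := f.coeff d with ha
  have hf0 : f ≠ 0 := by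
    intro h
    have : d = 0 := by rw [hdd, h, Polynomial.natDegree_zero]
    omega
  have ha0 : a ≠ 0 := by
    rw [ha, hdd, ← Polynomial.leadingCoeff]
    exact Polynomial.leadingCoeff_ne_zero.mpr hf0
  have hα : ∀ n, n < p → α n = α 0 * β^n / n ! := by
    intro n hn
    match n with
    | 0 => simp
    | 1 =>
      rw [hβ]
      field_simp
      simp
    | (k+2) =>
      have h := hpmin (k+2) (by omega) hn
      have hfac : ((k+2)! : ℝ) ≠ 0 := Nat.cast_ne_zero.mpr (Nat.factorial_ne_zero _)
      rw [hβ, div_pow]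
      rw [show (k+2) - 1 = k+1 from rfl] at h
      field_simp
      linear_combination α 0 * h
  have hδ0 : α p - α 0 * β^p / p ! ≠ 0 := by
    intro h
    apply hpne
    have hfac : (p ! : ℝ) ≠ 0 := Nat.cast_ne_zero.mpr (Nat.factorial_ne_zero _)
    have hval : α p = α 0 * β^p / p ! := by linarith
    have hpow : (α 0:ℝ)^p = α 0^(p-1) * α 0 := by
      rw [← pow_succ]
      congr 1
      omega
    rw [hval, hβ, div_pow, hpow]
    field_simp
  set γ := (α p - α 0 * β^p / p !) * (d.descFactorial p) / α 0 with hγ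
  have hdesc : (d.descFactorial p : ℝ) ≠ 0 :=
    Nat.cast_ne_zero.mpr (by rw [Ne, Nat.descFactorial_eq_zero_iff_lt]; omega)
  have hγ0 : γ ≠ 0 := div_ne_zero (mul_ne_zero hδ0 hdesc) h0
  have key : ∀ m : ℕ, (∀ z ∈ (((phiD α)^[m] f).map (algebraMap ℝ ℂ)).roots, z.im = 0) →
      ∃ M : Multiset ℝ, Multiset.card M = d ∧
        M.esymm 1 = -(f.coeff (d-1) / a) ∧
        (2 < p → M.esymm 2 = f.coeff (d-2) / a) ∧
        (-1:ℝ)^p * M.esymm p = f.coeff (d-p) / a + m * γ := by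
    intro m hall
    obtain ⟨hi1, hi2, hi3, hi4⟩ := aux_iter_coeffs α h0 p hp2 hα f hdeg m
    rw [← hdd] at hi2 hi3 hi4
    rw [← hγ] at hi4
    set G := Polynomial.taylor (-(m:ℝ) * β) ((phiD α)^[m] f) with hG
    have hAdm : (α 0)^m ≠ 0 := pow_ne_zero _ h0
    have hcd0 : G.coeff d ≠ 0 := by
      rw [hi2]
      exact mul_ne_zero hAdm ha0
    have hG0 : G ≠ 0 := fun h => hcd0 (by rw [h, Polynomial.coeff_zero])
    have hfm0 : (phiD α)^[m] f ≠ 0 := by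
      intro h
      apply hG0
      rw [hG, h, map_zero]
    have hGdeg : G.natDegree = d := le_antisymm hi1 (Polynomial.le_natDegree_of_ne_zero hcd0)
    have hGreal := aux_roots_taylor_real _ hfm0 (-(m:ℝ) * β) hall
    obtain ⟨M, hMcard, hMcoeff⟩ := aux_exists_real_roots_esymm G hG0 hGreal
    rw [hGdeg] at hMcard hMcoeff
    refine ⟨M, hMcard, ?_, ?_, ?_⟩
    · have h1 := hMcoeff 1 (by omega)
      rw [hi3 1 one_pos (by omega), hi2, mul_assoc] at h1
      have hc := mul_left_cancel₀ hAdm h1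
      rw [hc]
      field_simp
      rw [ha]
    · intro hplt
      have h1 := hMcoeff 2 (by omega)
      rw [hi3 2 two_pos hplt, hi2, mul_assoc] at h1
      have hc := mul_left_cancel₀ hAdm h1
      rw [hc]
      field_simp
      rw [ha]
    · have h1 := hMcoeff p (by omega)
      rw [hi4, hi2] at h1
      have hc := mul_left_cancel₀ hAdm (h1.trans (mul_assoc _ _ _))
      have hval : (-1:ℝ)^p * M.esymm p = (f.coeff (d-p) + m*γ*a)/a := by
        rw [eq_div_iff ha0]
        linear_combination -hc
      rw [hval, _root_.add_div, mul_div_assoc, div_self ha0, mul_one]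
  by_cases hpeq : p = 2
  · -- case p = 2
    subst hpeq
    have hγval : γ = (2*α 2*α 0 - α 1^2)/(2*α 0^2) * (d.descFactorial 2) := by
      rw [hγ, hβ]
      rw [show (2:ℕ)! = 2 from rfl, show ((2:ℕ):ℝ) = 2 from by norm_num]
      field_simp
    have hγpos : 0 < γ := by
      have hnum : (0:ℝ) ≤ (2*α 2*α 0 - α 1^2)/(2*α 0^2) * (d.descFactorial 2) := by
        apply mul_nonneg
        · exact div_nonneg h2 (by positivity)
        · positivity
      rcases hnum.lt_or_eq with h | h
      · rwa [hγval]
      · exact absurd (hγval.trans h.symm) hγ0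
    obtain ⟨N, hN⟩ := exists_nat_gt
      (((f.coeff (d-1)/a)^2 - 2*(f.coeff (d-2)/a))/(2*γ))
    refine ⟨N+1, by omega, ?_⟩
    intro m hm
    by_contra hcon
    push_neg at hcon
    obtain ⟨M, hMcard, he1, _, hep⟩ := key m hcon
    have he2 : M.esymm 2 = f.coeff (d-2)/a + m*γ := by
      rw [← hep]
      norm_num
    have hsq := aux_sq_sum_eq M
    rw [← aux_esymm_one M, he1, he2, neg_sq] at hsq
    have hs2 : (0:ℝ) ≤ (M.map fun r => r^2).sum := by
      apply Multiset.sum_nonneg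
      intro x hx
      obtain ⟨r, _, rfl⟩ := Multiset.mem_map.mp hx
      positivity
    have hmle : (m:ℝ) ≤ ((f.coeff (d-1)/a)^2 - 2*(f.coeff (d-2)/a))/(2*γ) := by
      rw [le_div_iff₀ (by linarith : (0:ℝ) < 2*γ)]
      nlinarith
    have hmN : ((N:ℝ)+1) ≤ (m:ℝ) := by
      have : (N+1 : ℕ) ≤ m := hm
      exact_mod_cast this
    linarith
  · -- case p > 2
    have hplt : 2 < p := by omega
    set S := (f.coeff (d-1)/a)^2 - 2*(f.coeff (d-2)/a) with hS
    set Bd := (d.choose p : ℝ) * (Real.sqrt S)^p with hBd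
    obtain ⟨N, hN⟩ := exists_nat_gt ((|f.coeff (d-p)/a| + Bd)/|γ|)
    refine ⟨N+1, by omega, ?_⟩
    intro m hm
    by_contra hcon
    push_neg at hcon
    obtain ⟨M, hMcard, he1, he2', hep⟩ := key m hcon
    have he2 := he2' hplt
    have hsq := aux_sq_sum_eq M
    rw [← aux_esymm_one M, he1, he2, neg_sq] at hsq
    have hs2 : (M.map fun r => r^2).sum = S := by
      rw [hS]
      linarith
    have hrle : ∀ r ∈ M, |r| ≤ Real.sqrt S := by
      intro r hr
      have h1 : r^2 ≤ S := by
        rw [← hs2]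
        refine Multiset.single_le_sum ?_ _ (Multiset.mem_map_of_mem _ hr)
        intro x hx
        obtain ⟨u, _, rfl⟩ := Multiset.mem_map.mp hx
        positivity
      calc |r| = Real.sqrt (r^2) := (Real.sqrt_sq_eq_abs r).symm
      _ ≤ Real.sqrt S := Real.sqrt_le_sqrt h1
    have hbound := aux_esymm_abs_bound M p (Real.sqrt S) (Real.sqrt_nonneg S) hrle
    rw [hMcard] at hbound
    have habs : |f.coeff (d-p)/a + m*γ| ≤ Bd := by
      rw [← hep, abs_mul, abs_pow, abs_neg, abs_one, one_pow, one_mul, hBd]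
      exact hbound
    have hγa : 0 < |γ| := abs_pos.mpr hγ0
    have h5 : (m:ℝ) * |γ| ≤ |f.coeff (d-p)/a| + Bd := by
      have hcalc : (m:ℝ)*|γ| = |(f.coeff (d-p)/a + m*γ) - f.coeff (d-p)/a| := by
        rw [show (f.coeff (d-p)/a + m*γ) - f.coeff (d-p)/a = (m:ℝ)*γ by ring,
          abs_mul, Nat.abs_cast]
      rw [hcalc, sub_eq_add_neg]
      refine (abs_add_le _ _).trans ?_
      rw [abs_neg]
      linarith
    have hmle : (m:ℝ) ≤ (|f.coeff (d-p)/a| + Bd)/|γ| := by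
      rw [le_div_iff₀ hγa]
      exact h5
    have hmN : ((N:ℝ)+1) ≤ (m:ℝ) := by
      have : (N+1 : ℕ) ≤ m := hm
      exact_mod_cast this
    linarith
end

section
/- If β > 0 is a real number and d is a positive integer, then every complex zero of the polynomial exp(−βD²)M^d is real and simple. -/
open Polynomial Nat

/-- The polynomial `exp(βD^p)M^d`, i.e. `∑_{k=0}^{⌊d/p⌋} (d!·βᵏ/(k!·(d−pk)!))·x^{d−pk}`. -/
noncomputable def expD (β : ℂ) (p d : ℕ) : Polynomial ℂ :=
  ∑ k ∈ Finset.range (d / p + 1),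
    Polynomial.C ((d ! : ℂ) * β ^ k / ((k ! : ℂ) * ((d - p * k)! : ℂ))) *
      Polynomial.X ^ (d - p * k)

lemma derivative_hermite (n : ℕ) :
    derivative (hermite (n + 1)) = C (n + 1 : ℤ) * hermite n := by
  induction n with
  | zero => simp [hermite_one, hermite_zero]
  | succ n ih =>
    rw [hermite_succ (n+1), derivative_sub, derivative_mul, derivative_X, one_mul, ih,
      derivative_mul, derivative_C, zero_mul, zero_add, hermite_succ n]
    simp only [Nat.cast_add, Nat.cast_one, map_add, map_one]
    ring

lemma hermite_rec (n : ℕ) :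
    hermite (n + 2) = X * hermite (n + 1) - C (n + 1 : ℤ) * hermite n := by
  rw [hermite_succ (n+1), derivative_hermite]

lemma coeff_comp_C_mul_X (p : Polynomial ℂ) (c : ℂ) (m : ℕ) :
    (p.comp (C c * X)).coeff m = p.coeff m * c ^ m := by
  induction p using Polynomial.induction_on' with
  | add p q hp hq => simp [add_comp, hp, hq, add_mul]
  | monomial n a =>
    rw [monomial_comp, mul_pow, ← C_pow, ← mul_assoc, ← C_mul]
    simp only [coeff_C_mul, coeff_X_pow, coeff_monomial]
    by_cases h : n = m
    · subst h; simp
    · simp [h, Ne.symm h]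


lemma prod_sign (n : ℕ) (r : ℕ → ℝ) (c : ℝ) (m : ℕ)
    (h1 : ∀ i < n, i < m → r i < c)
    (h2 : ∀ i < n, m ≤ i → c < r i) :
    0 < (-1 : ℝ) ^ (n - m) * ∏ i ∈ Finset.range n, (c - r i) := by
  have hcard : ((Finset.range n).filter fun i => m ≤ i).card = n - m := by
    have : ((Finset.range n).filter fun i => m ≤ i) = Finset.Ico m n := by
      ext i; simp [Finset.mem_Ico, Finset.mem_filter]; omega
    rw [this, Nat.card_Ico]
  have key : (∏ i ∈ Finset.range n, (if m ≤ i then r i - c else c - r i))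
      = (-1 : ℝ) ^ (n - m) * ∏ i ∈ Finset.range n, (c - r i) := by
    have h3 : ∀ i ∈ Finset.range n, (if m ≤ i then r i - c else c - r i)
        = (if m ≤ i then (-1 : ℝ) else 1) * (c - r i) := by
      intro i _; split_ifs <;> ring
    rw [Finset.prod_congr rfl h3, Finset.prod_mul_distrib]
    congr 1
    rw [Finset.prod_ite, Finset.prod_const, Finset.prod_const, one_pow, mul_one, hcard]
  rw [← key]
  apply Finset.prod_pos
  intro i hi
  rw [Finset.mem_range] at hi
  split_ifs with h
  · linarith [h2 i hi h]
  · linarith [h1 i hi (by omega)]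

lemma exists_root_between (p : Polynomial ℝ) (a b : ℝ) (hab : a < b)
    (h : p.eval a * p.eval b < 0) : ∃ x ∈ Set.Ioo a b, p.eval x = 0 := by
  have hc : ContinuousOn (fun x => p.eval x) (Set.Icc a b) := (p.continuous).continuousOn
  rcases lt_or_ge (p.eval a) 0 with ha | ha
  · have hb : 0 < p.eval b := by nlinarith
    obtain ⟨x, hx, hx0⟩ := intermediate_value_Ioo hab.le hc (Set.mem_Ioo.2 ⟨ha, hb⟩)
    exact ⟨x, hx, hx0⟩
  · have ha' : 0 < p.eval a := by
      rcases ha.lt_or_eq with h' | h'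
      · exact h'
      · exfalso; rw [← h'] at h; simp at h
    have hb : p.eval b < 0 := by nlinarith
    obtain ⟨x, hx, hx0⟩ := intermediate_value_Ioo' hab.le hc (Set.mem_Ioo.2 ⟨hb, ha'⟩)
    exact ⟨x, hx, hx0⟩

lemma monic_eq_prod {n : ℕ} {K : Type*} [Field K] (p : Polynomial K) (hm : p.Monic)
    (hdeg : p.natDegree = n) (u : ℕ → K)
    (hu : ∀ i < n, ∀ j < n, u i = u j → i = j)
    (hr : ∀ i < n, p.eval (u i) = 0) : p = ∏ i ∈ Finset.range n, (X - C (u i)) := by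
  have hp0 : p ≠ 0 := hm.ne_zero
  set M : Multiset K := (Finset.range n).val.map u with hM
  have hnd : M.Nodup := by
    refine Multiset.Nodup.map_on ?_ (Finset.range n).nodup
    intro i hi j hj
    exact fun h => hu i (by simpa using hi) j (by simpa using hj) h
  have hle : M ≤ p.roots := by
    rw [Multiset.le_iff_subset hnd]
    intro a ha
    rw [hM, Multiset.mem_map] at ha
    obtain ⟨i, hi, rfl⟩ := ha
    rw [mem_roots hp0]
    exact hr i (by simpa using hi)
  have hcardM : Multiset.card M = n := by simp [hM]
  have hcard : Multiset.card p.roots = p.natDegree := by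
    have := Polynomial.card_roots' p
    have := Multiset.card_le_card hle
    omega
  have heq : p.roots = M := (Multiset.eq_of_le_of_card_le hle (by omega)).symm
  have h2 := (prod_multiset_X_sub_C_of_monic_of_roots_card_eq hm hcard).symm
  rw [h2, heq, hM, Multiset.map_map]
  rfl

noncomputable def Hr (n : ℕ) : Polynomial ℝ := (hermite n).map (Int.castRingHom ℝ)

lemma Hr_monic (n : ℕ) : (Hr n).Monic := (hermite_monic n).map _

lemma Hr_natDegree (n : ℕ) : (Hr n).natDegree = n := by
  rw [Hr, (hermite_monic n).natDegree_map, natDegree_hermite]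

lemma Hr_rec (n : ℕ) : Hr (n + 2) = X * Hr (n + 1) - C ((n : ℝ) + 1) * Hr n := by
  rw [Hr, hermite_rec, Polynomial.map_sub, Polynomial.map_mul, Polynomial.map_mul,
    map_X, map_C, Hr, Hr]
  simp

lemma chain_mono (u : ℕ → ℝ) (n : ℕ) (h : ∀ i < n, u i < u (i + 1)) :
    ∀ i j, i < j → j ≤ n → u i < u j := by
  intro i j hij hjn
  induction j with
  | zero => omega
  | succ j ih =>
    rcases Nat.lt_or_ge i j with h' | h'
    · exact (ih h' (by omega)).trans (h j (by omega))
    · have : i = j := by omega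
      subst this
      exact h i (by omega)

lemma key : ∀ n : ℕ, ∃ r t : ℕ → ℝ,
    (∀ i j, i < j → j ≤ n → t i < t j) ∧
    Hr n = ∏ i ∈ Finset.range n, (X - C (r i)) ∧
    Hr (n + 1) = ∏ i ∈ Finset.range (n + 1), (X - C (t i)) ∧
    (∀ i < n, t i < r i ∧ r i < t (i + 1)) := by
  intro n
  induction n with
  | zero =>
    refine ⟨fun _ => 0, fun _ => 0, by omega, ?_, ?_, by omega⟩
    · simp [Hr, hermite_zero]
    · simp [Hr, hermite_one]
  | succ n ihn =>
    obtain ⟨r, t, htm, hrp, htp, hint⟩ := ihn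
    set p := Hr (n + 2) with hp
    have hpm : p.Monic := Hr_monic _
    have hp0 : p ≠ 0 := hpm.ne_zero
    have hnd : p.natDegree = n + 2 := Hr_natDegree _
    -- evaluation at the roots t j
    have heval : ∀ j ≤ n, p.eval (t j)
        = -((n : ℝ) + 1) * ∏ i ∈ Finset.range n, (t j - r i) := by
      intro j hj
      have h1 : (Hr (n + 1)).eval (t j) = 0 := by
        rw [htp, eval_prod]
        refine Finset.prod_eq_zero (i := j) (Finset.mem_range.2 (by omega)) ?_
        simp
      have h2 : (Hr n).eval (t j) = ∏ i ∈ Finset.range n, (t j - r i) := by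
        rw [hrp, eval_prod]; simp
      rw [hp, Hr_rec, eval_sub, eval_mul, eval_mul, eval_X, eval_C, h1, h2]
      ring
    -- sign at the roots t j
    have hsign : ∀ j ≤ n, 0 < (-1 : ℝ) ^ (n - j + 1) * p.eval (t j) := by
      intro j hj
      have hps := prod_sign n r (t j) j
        (fun i hi hij => by
          have h1 : r i < t (i + 1) := (hint i hi).2
          rcases Nat.lt_or_ge (i + 1) j with h' | h'
          · exact h1.trans (htm _ _ h' hj)
          · have : i + 1 = j := by omega
            rw [this] at h1; exact h1)
        (fun i hi hij => by
          have h1 : t i < r i := (hint i hi).1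
          rcases Nat.lt_or_ge j i with h' | h'
          · exact (htm _ _ h' (by omega)).trans h1
          · have : j = i := by omega
            rw [this]; exact h1)
      rw [heval j hj, pow_succ]
      have hE : (-1 : ℝ) ^ (n - j) * -1 * (-((n : ℝ) + 1) * ∏ i ∈ Finset.range n, (t j - r i))
          = ((n : ℝ) + 1) * ((-1 : ℝ) ^ (n - j) * ∏ i ∈ Finset.range n, (t j - r i)) := by ring
      rw [hE]
      exact mul_pos (by positivity) hps
    -- roots in the gaps
    have hmid : ∀ i, ∃ x, i < n → x ∈ Set.Ioo (t i) (t (i + 1)) ∧ p.eval x = 0 := by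
      intro i
      by_cases hi : i < n
      · have hs1 := hsign i (by omega)
        have hs2 := hsign (i + 1) (by omega)
        have e1 : n - i + 1 = (n - (i + 1)) + 2 := by omega
        have e2 : n - (i + 1) + 1 = (n - (i + 1)) + 1 := rfl
        set a := n - (i + 1) with ha
        rw [e1] at hs1
        have hodd : ((-1 : ℝ)) ^ (a + 2) * (-1 : ℝ) ^ (a + 1) = -1 := by
          rw [← pow_add]
          exact Odd.neg_one_pow ⟨a + 1, by ring⟩
        have hprod : p.eval (t i) * p.eval (t (i + 1)) < 0 := by
          nlinarith [mul_pos hs1 hs2]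
        obtain ⟨x, hx, hx0⟩ := exists_root_between p (t i) (t (i + 1))
          (htm i (i + 1) (by omega) (by omega)) hprod
        exact ⟨x, fun _ => ⟨hx, hx0⟩⟩
      · exact ⟨0, fun h => absurd h hi⟩
    choose xm hxm using hmid
    -- root to the right
    have hlastsign : p.eval (t n) < 0 := by
      have := hsign n (le_refl n)
      simp at this
      linarith
    have hdeg' : (0 : WithBot ℕ) < p.degree := by
      rw [degree_eq_natDegree hp0, hnd]
      exact_mod_cast Nat.succ_pos _
    have htend := p.tendsto_atTop_of_leadingCoeff_nonneg hdeg' (by rw [hpm.leadingCoeff]; norm_num)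
    obtain ⟨b, hb1, hb2⟩ := ((htend.eventually_gt_atTop 0).and
      (Filter.eventually_gt_atTop (t n))).exists
    obtain ⟨xb, hxb, hxb0⟩ := exists_root_between p (t n) b hb2 (by nlinarith)
    -- root to the left
    have hfirstsign : 0 < (-1 : ℝ) ^ (n + 1) * p.eval (t 0) := by
      have := hsign 0 (by omega)
      simpa using this
    set q : Polynomial ℝ := C ((-1 : ℝ) ^ n) * p.comp (-X) with hq
    have hcompdeg : (p.comp (-X)).natDegree = n + 2 := by
      rw [natDegree_comp, hnd]
      simp
    have hclc : (p.comp (-X)).leadingCoeff = (-1 : ℝ) ^ (n + 2) := by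
      rw [leadingCoeff_comp (by simp), hpm.leadingCoeff, hnd]
      simp
    have hqlc : q.leadingCoeff = 1 := by
      rw [hq, leadingCoeff_mul, leadingCoeff_C, hclc, ← pow_add]
      exact Even.neg_one_pow ⟨n + 1, by ring⟩
    have hq0 : q ≠ 0 := fun h => by simp [h] at hqlc
    have hqnd : q.natDegree = n + 2 := by
      rw [hq, natDegree_C_mul (by positivity), hcompdeg]
    have hqdeg : (0 : WithBot ℕ) < q.degree := by
      rw [degree_eq_natDegree hq0, hqnd]
      exact_mod_cast Nat.succ_pos _
    have hqtend := q.tendsto_atTop_of_leadingCoeff_nonneg hqdeg (by rw [hqlc]; norm_num)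
    obtain ⟨y, hy1, hy2⟩ := ((hqtend.eventually_gt_atTop 0).and
      (Filter.eventually_gt_atTop (-(t 0)))).exists
    have hevq : q.eval y = (-1 : ℝ) ^ n * p.eval (-y) := by
      rw [hq, eval_mul, eval_C, eval_comp]
      simp
    rw [hevq] at hy1
    have hylt : -y < t 0 := by linarith
    have hprod0 : p.eval (-y) * p.eval (t 0) < 0 := by
      have hodd : ((-1 : ℝ)) ^ (n + 1) * (-1 : ℝ) ^ n = -1 := by
        rw [← pow_add]
        exact Odd.neg_one_pow ⟨n, by ring⟩
      nlinarith [mul_pos hfirstsign hy1]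
    obtain ⟨x0, hx0mem, hx00⟩ := exists_root_between p (-y) (t 0) hylt hprod0
    -- assemble u
    set u : ℕ → ℝ := fun j => if j = 0 then x0 else if j ≤ n then xm (j - 1) else xb with hu
    have hu0 : u 0 = x0 := by simp [hu]
    have humid : ∀ j, 1 ≤ j → j ≤ n → u j = xm (j - 1) := by
      intro j h1 h2
      simp only [hu]
      rw [if_neg (by omega), if_pos h2]
    have hub : ∀ j, n + 1 ≤ j → u j = xb := by
      intro j h1
      simp only [hu]
      rw [if_neg (by omega), if_neg (by omega)]
    have hint' : ∀ i < n + 1, u i < t i ∧ t i < u (i + 1) := by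
      intro i hi
      constructor
      · rcases Nat.eq_zero_or_pos i with rfl | hipos
        · rw [hu0]; exact hx0mem.2
        · rw [humid i hipos (by omega)]
          have := (hxm (i - 1) (by omega)).1
          rw [Set.mem_Ioo] at this
          have e : i - 1 + 1 = i := by omega
          rw [e] at this
          exact this.2
      · rcases Nat.lt_or_ge i n with h' | h'
        · rw [humid (i + 1) (by omega) (by omega)]
          have := (hxm i h').1
          rw [Set.mem_Ioo] at this
          simpa using this.1
        · have : i = n := by omega
          subst this
          rw [hub (i + 1) (by omega)]
          exact hxb.1
    have huroot : ∀ j < n + 2, p.eval (u j) = 0 := by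
      intro j hj
      rcases Nat.eq_zero_or_pos j with rfl | hjpos
      · rw [hu0]; exact hx00
      · rcases Nat.lt_or_ge j (n + 1) with h' | h'
        · rw [humid j hjpos (by omega)]
          exact (hxm (j - 1) (by omega)).2
        · rw [hub j h']
          exact hxb0
    have humono : ∀ i j, i < j → j ≤ n + 1 → u i < u j := by
      apply chain_mono
      intro i hi
      exact ((hint' i hi).1).trans (hint' i hi).2
    refine ⟨t, u, humono, htp, ?_, hint'⟩
    exact monic_eq_prod p hpm hnd u
      (fun i hi j hj hij => by
        by_contra hne
        rcases Nat.lt_or_ge i j with h' | h'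
        · exact absurd hij (ne_of_lt (humono i j h' (by omega)))
        · exact absurd hij.symm (ne_of_lt (humono j i (by omega) (by omega))))
      huroot

lemma fact_double (k : ℕ) : (2 * k)! = 2 ^ k * k ! * (2 * k - 1)‼ := by
  cases k with
  | zero => simp
  | succ k =>
    have h1 : 2 * (k + 1) = (2 * k + 1) + 1 := by ring
    rw [h1, Nat.factorial_eq_mul_doubleFactorial]
    have h2 : 2 * k + 1 + 1 = 2 * (k + 1) := by ring
    have h3 : 2 * (k + 1) - 1 = 2 * k + 1 := by omega
    rw [h2, Nat.doubleFactorial_two_mul, h3]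

lemma expB (β : ℝ) (hβ : 0 < β) (d : ℕ) :
    expD (-(β : ℂ)) 2 d = C ((Real.sqrt (2 * β) : ℂ) ^ d) *
      ((hermite d).map (Int.castRingHom ℂ)).comp
        (C ((Real.sqrt (2 * β) : ℂ))⁻¹ * X) := by
  set s : ℝ := Real.sqrt (2 * β) with hsdef
  have hspos : 0 < s := Real.sqrt_pos.2 (by linarith)
  have hs0 : (s : ℂ) ≠ 0 := by exact_mod_cast hspos.ne'
  have hs2 : (s : ℂ) ^ 2 = 2 * (β : ℂ) := by
    have : s ^ 2 = 2 * β := Real.sq_sqrt (by linarith)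
    exact_mod_cast this
  ext m
  have hL : (expD (-(β : ℂ)) 2 d).coeff m = ∑ k ∈ Finset.range (d / 2 + 1),
      (if m = d - 2 * k then (d ! : ℂ) * (-(β : ℂ)) ^ k / ((k ! : ℂ) * ((d - 2 * k)! : ℂ))
       else 0) := by
    rw [expD, finset_sum_coeff]
    refine Finset.sum_congr rfl fun k _ => ?_
    rw [coeff_C_mul, coeff_X_pow, mul_ite, mul_one, mul_zero]
  have hR : (C ((s : ℂ) ^ d) * ((hermite d).map (Int.castRingHom ℂ)).comp
      (C ((s : ℂ))⁻¹ * X)).coeff m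
      = (s : ℂ) ^ d * ((s : ℂ)⁻¹) ^ m * ((hermite d).coeff m : ℤ) := by
    rw [coeff_C_mul, coeff_comp_C_mul_X, coeff_map, eq_intCast]
    ring
  rw [hL, hR]
  by_cases hpar : Even (d + m)
  · rcases Nat.lt_or_ge d m with hdm | hdm
    · -- m > d : both sides zero
      rw [Finset.sum_eq_zero, coeff_hermite_of_even_add hpar,
        Nat.choose_eq_zero_of_lt hdm]
      · push_cast; ring
      · intro k hk
        rw [if_neg]
        rw [Finset.mem_range] at hk
        have : k * 2 ≤ d := Nat.mul_le_of_le_div 2 k d (by omega)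
        omega
    · -- m ≤ d, parity matches
      obtain ⟨c, hc⟩ := hpar
      set k0 := (d - m) / 2 with hk0
      have hdk : d - m = 2 * k0 ∧ d = m + 2 * k0 := by omega
      have hk0r : k0 ∈ Finset.range (d / 2 + 1) := Finset.mem_range.2 (by omega)
      rw [Finset.sum_eq_single k0 (fun k hk hne => by
          rw [if_neg]
          rw [Finset.mem_range] at hk
          have : k * 2 ≤ d := Nat.mul_le_of_le_div 2 k d (by omega)
          omega)
        (fun h => absurd hk0r h), if_pos (by omega)]
      rw [coeff_hermite_of_even_add ⟨c, hc⟩]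
      have e1 : d - 2 * k0 = m := by omega
      have e2 : (d - m) / 2 = k0 := rfl
      have e3 : d - m - 1 = 2 * k0 - 1 := by omega
      rw [e1, e3]
      have hsd : (s : ℂ) ^ d * ((s : ℂ)⁻¹) ^ m = (2 * (β : ℂ)) ^ k0 := by
        have hd' : d = m + 2 * k0 := hdk.2
        rw [hd', pow_add, mul_comm ((s:ℂ)^m), mul_assoc, ← mul_pow,
          mul_inv_cancel₀ hs0, one_pow, mul_one, pow_mul, hs2]
      have hfact : (d ! : ℕ) = Nat.choose d m * m ! * (2 ^ k0 * k0 ! * (2 * k0 - 1)‼) := by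
        rw [← Nat.choose_mul_factorial_mul_factorial hdm]
        congr 1
        rw [hdk.1, fact_double]
      have hfactC : (d ! : ℂ) = (Nat.choose d m : ℂ) * (m ! : ℂ) *
          (2 ^ k0 * (k0 ! : ℂ) * ((2 * k0 - 1)‼ : ℂ)) := by exact_mod_cast congrArg Nat.cast hfact
      have hm0 : (m ! : ℂ) ≠ 0 := Nat.cast_ne_zero.2 (Nat.factorial_ne_zero m)
      have hk00 : (k0 ! : ℂ) ≠ 0 := Nat.cast_ne_zero.2 (Nat.factorial_ne_zero k0)
      rw [hsd]
      push_cast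
      field_simp
      linear_combination ((-1 : ℂ)) ^ k0 * (β : ℂ) ^ k0 * hfactC
  · -- odd case : both sides zero
    rw [coeff_hermite_of_odd_add (Nat.not_even_iff_odd.1 hpar)]
    rw [Finset.sum_eq_zero]
    · push_cast; ring
    · intro k hk
      rw [if_neg]
      rw [Finset.mem_range] at hk
      have h2k : k * 2 ≤ d := Nat.mul_le_of_le_div 2 k d (by omega)
      intro h
      exact hpar ⟨d - k, by omega⟩


/-- If `β > 0` then every complex zero of `exp(−βD²)M^d` is real and simple. -/
theorem stmt5 (β : ℝ) (hβ : 0 < β) (d : ℕ) (hd : 0 < d) :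
    (expD (-(β : ℂ)) 2 d).roots.Nodup ∧
      ∀ z ∈ (expD (-(β : ℂ)) 2 d).roots, z.im = 0 := by
  set s : ℝ := Real.sqrt (2 * β) with hsdef
  have hspos : 0 < s := Real.sqrt_pos.2 (by linarith)
  have hs0 : (s : ℂ) ≠ 0 := by exact_mod_cast hspos.ne'
  obtain ⟨r, t, htm, hrp, htp, hint⟩ := key (d - 1)
  have hd1 : d - 1 + 1 = d := by omega
  rw [hd1] at htp
  have htinj : ∀ i < d, ∀ j < d, t i = t j → i = j := by
    intro i hi j hj hij
    by_contra hne
    rcases Nat.lt_or_ge i j with h' | h'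
    · exact absurd hij (ne_of_lt (htm i j h' (by omega)))
    · exact absurd hij.symm (ne_of_lt (htm j i (by omega) (by omega)))
  have hmapC : (hermite d).map (Int.castRingHom ℂ)
      = ∏ i ∈ Finset.range d, (X - C ((t i : ℂ))) := by
    have h1 : (Int.castRingHom ℂ) = (algebraMap ℝ ℂ).comp (Int.castRingHom ℝ) :=
      Subsingleton.elim _ _
    rw [h1, ← Polynomial.map_map, ← Hr, htp, Polynomial.map_prod]
    refine Finset.prod_congr rfl fun i _ => ?_
    rw [Polynomial.map_sub, map_X, map_C]
    norm_num
  have hexp : expD (-(β : ℂ)) 2 d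
      = ∏ i ∈ Finset.range d, (X - C ((s * t i : ℝ) : ℂ)) := by
    rw [expB β hβ d, ← hsdef, hmapC, prod_comp]
    have hfac : ∀ i ∈ Finset.range d, (X - C ((t i : ℂ))).comp (C ((s : ℂ))⁻¹ * X)
        = C ((s : ℂ))⁻¹ * (X - C ((s * t i : ℝ) : ℂ)) := by
      intro i _
      rw [sub_comp, X_comp, C_comp, mul_sub]
      congr 1
      rw [← C_mul]
      congr 1
      push_cast
      field_simp
    rw [Finset.prod_congr rfl hfac, Finset.prod_mul_distrib, Finset.prod_const,
      Finset.card_range, ← mul_assoc, ← C_pow, ← C_mul, ← mul_pow,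
      mul_inv_cancel₀ hs0, one_pow, map_one, one_mul]
  set M : Multiset ℂ := (Finset.range d).val.map (fun i => ((s * t i : ℝ) : ℂ)) with hM
  have hroots : (expD (-(β : ℂ)) 2 d).roots = M := by
    rw [hexp]
    have h2 : ∏ i ∈ Finset.range d, (X - C ((s * t i : ℝ) : ℂ))
        = (M.map (fun a => X - C a)).prod := by
      rw [hM, Multiset.map_map]; rfl
    rw [h2, roots_multiset_prod_X_sub_C]
  constructor
  · rw [hroots, hM]
    refine Multiset.Nodup.map_on ?_ (Finset.range d).nodup
    intro i hi j hj hij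
    have hi' : i < d := by simpa using hi
    have hj' : j < d := by simpa using hj
    have : (s * t i : ℝ) = (s * t j : ℝ) := by exact_mod_cast hij
    exact htinj i hi' j hj' (mul_left_cancel₀ hspos.ne' this)
  · intro z hz
    rw [hroots, hM] at hz
    obtain ⟨i, _, rfl⟩ := Multiset.mem_map.1 hz
    exact Complex.ofReal_im _
end

section
/- If β > 0 is a real number and d is a positive integer, then the polynomial exp(βD²)M^d has exactly 2⌊d/2⌋ distinct purely imaginary zeros (zeros of the form it with t ∈ ℝ, t ≠ 0), and every nonzero complex zero of exp(βD²)M^d is purely imaginary. -/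
open Polynomial Nat

section Aux
open Finset Complex
open scoped Nat


noncomputable def H (n : ℕ) : Polynomial ℝ := (hermite n).map (Int.castRingHom ℝ)

lemma H_succ (n : ℕ) : H (n+1) = X * H n - derivative (H n) := by
  unfold H
  rw [hermite_succ, Polynomial.map_sub, Polynomial.map_mul, map_X, derivative_map]

lemma H_monic (n : ℕ) : (H n).Monic := (hermite_monic n).map _

lemma H_natDegree (n : ℕ) : (H n).natDegree = n := by
  have := (hermite_monic n).natDegree_map (Int.castRingHom ℝ)
  rw [natDegree_hermite] at this
  exact this

-- product of pairwise differences sign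
lemma prod_diff_sign {n : ℕ} {r : Fin n → ℝ} (hr : StrictMono r) (i : Fin n) :
    0 < (-1:ℝ)^(n - 1 - i.val) * ∏ j ∈ Finset.univ.erase i, (r i - r j) := by
  have hsplit : (Finset.univ.erase i) = Finset.Iio i ∪ Finset.Ioi i := by
    ext j
    simp only [mem_erase, mem_union, mem_Iio, mem_Ioi, Finset.mem_univ, and_true]
    exact ne_iff_lt_or_gt
  have hdisj : Disjoint (Finset.Iio i) (Finset.Ioi i) := by
    simp [Finset.disjoint_left]
    intro a ha; exact le_of_lt ha
  rw [hsplit, Finset.prod_union hdisj]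
  have h1 : 0 < ∏ j ∈ Finset.Iio i, (r i - r j) := by
    apply Finset.prod_pos
    intro j hj
    simp only [mem_Iio] at hj
    exact sub_pos.2 (hr hj)
  have h2 : ∏ j ∈ Finset.Ioi i, (r i - r j) = (-1:ℝ)^(n - 1 - i.val) * ∏ j ∈ Finset.Ioi i, (r j - r i) := by
    calc ∏ j ∈ Finset.Ioi i, (r i - r j) = ∏ j ∈ Finset.Ioi i, (-1) * (r j - r i) := by
          apply Finset.prod_congr rfl; intro j _; ring
      _ = (-1:ℝ)^(n - 1 - i.val) * ∏ j ∈ Finset.Ioi i, (r j - r i) := by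
          rw [Finset.prod_mul_distrib, Finset.prod_const, Fin.card_Ioi]
  have h3 : 0 < ∏ j ∈ Finset.Ioi i, (r j - r i) := by
    apply Finset.prod_pos
    intro j hj
    simp only [mem_Ioi] at hj
    exact sub_pos.2 (hr hj)
  rw [h2]
  have hsq : (-1:ℝ)^(n - 1 - i.val) * (-1:ℝ)^(n - 1 - i.val) = 1 := by
    rw [← pow_add, ← two_mul, pow_mul]; norm_num
  calc (0:ℝ) < ((∏ j ∈ Finset.Iio i, (r i - r j)) * ∏ j ∈ Finset.Ioi i, (r j - r i)) := by positivity
    _ = (-1:ℝ)^(n - 1 - i.val) * ((∏ j ∈ Finset.Iio i, (r i - r j)) * ((-1:ℝ)^(n - 1 - i.val) * ∏ j ∈ Finset.Ioi i, (r j - r i))) := by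
        rw [show ∀ a b c : ℝ, a * (b * (a * c)) = (a*a) * (b * c) by intros; ring, hsq]; ring

-- evaluation of H (n+1) at a root of H n
lemma eval_H_succ_at_root {n : ℕ} {r : Fin n → ℝ} (hfull : H n = ∏ i, (X - C (r i))) (i : Fin n) :
    eval (r i) (H (n+1)) = - ∏ j ∈ Finset.univ.erase i, (r i - r j) := by
  have hroot : eval (r i) (H n) = 0 := by
    rw [hfull, eval_prod]
    apply Finset.prod_eq_zero (Finset.mem_univ i)
    simp
  have hder : eval (r i) (derivative (H n)) = ∏ j ∈ Finset.univ.erase i, (r i - r j) := by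
    have hd : derivative (∏ j, (X - C (r j))) =
        ∑ j, (∏ a ∈ Finset.univ.erase j, (X - C (r a))) * derivative (X - C (r j)) := by
      classical
      rw [Finset.prod_eq_multiset_prod, derivative_prod, Finset.sum_eq_multiset_sum]
      congr 1
    rw [hfull, hd, eval_finset_sum]
    rw [Finset.sum_eq_single i]
    · simp [eval_prod]
    · intro b _ hb
      rw [eval_mul, eval_prod]
      have : ∃ a ∈ Finset.univ.erase b, eval (r i) (X - C (r a)) = 0 := by
        refine ⟨i, Finset.mem_erase.2 ⟨Ne.symm hb, Finset.mem_univ i⟩, by simp⟩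
      obtain ⟨a, ha, hav⟩ := this
      rw [Finset.prod_eq_zero ha hav, zero_mul]
    · intro h; exact absurd (Finset.mem_univ i) h
  rw [H_succ, eval_sub, eval_mul, eval_X, hroot, hder]
  ring

lemma ivt_poly {p : Polynomial ℝ} {a b : ℝ} (hab : a < b) (h : eval a p * eval b p < 0) :
    ∃ c ∈ Set.Ioo a b, eval c p = 0 := by
  have hcont : ContinuousOn (fun x => eval x p) (Set.Icc a b) := (p.continuous_aeval).continuousOn
  rcases lt_or_ge (eval a p) 0 with ha | ha
  · have hb : 0 < eval b p := by nlinarith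
    have := intermediate_value_Ioo hab.le hcont (Set.mem_Ioo.2 ⟨ha, hb⟩)
    obtain ⟨c, hc, hc0⟩ := this
    exact ⟨c, hc, hc0⟩
  · have ha' : 0 < eval a p := by
      rcases ha.lt_or_eq with h1 | h1
      · exact h1
      · exfalso; rw [← h1] at h; nlinarith
    have hb : eval b p < 0 := by nlinarith
    have := intermediate_value_Ioo' hab.le hcont (Set.mem_Ioo.2 ⟨hb, ha'⟩)
    obtain ⟨c, hc, hc0⟩ := this
    exact ⟨c, hc, hc0⟩

lemma eq_prod_of_monic_of_roots {p : Polynomial ℝ} (hm : p.Monic) {n : ℕ}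
    (hdeg : p.natDegree = n) {c : Fin n → ℝ} (hinj : Function.Injective c)
    (hroot : ∀ i, p.IsRoot (c i)) : p = ∏ i, (X - C (c i)) := by
  classical
  have hp0 : p ≠ 0 := hm.ne_zero
  set s : Finset ℝ := Finset.univ.image c with hs_def
  have hcard : s.card = n := by
    rw [hs_def, Finset.card_image_of_injective _ hinj, Finset.card_univ, Fintype.card_fin]
  have hs : s.val ≤ p.roots := by
    rw [Multiset.le_iff_count]
    intro x
    by_cases hx : x ∈ s
    · have h1 : s.val.count x = 1 := by
        rw [Multiset.count_eq_one_of_mem s.nodup hx]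
      rw [h1, count_roots]
      obtain ⟨i, _, hi⟩ := Finset.mem_image.1 hx
      exact (rootMultiplicity_pos hp0).2 (hi ▸ hroot i)
    · rw [Multiset.count_eq_zero.2 (fun hmem => hx hmem)]
      exact Nat.zero_le _
  have hdvd : (∏ x ∈ s, (X - C x)) ∣ p := by
    rw [Finset.prod_eq_multiset_prod]
    exact dvd_trans (Multiset.prod_dvd_prod_of_le (Multiset.map_le_map hs))
      (prod_multiset_X_sub_C_dvd p)
  obtain ⟨v, hv⟩ := hdvd
  have hqmonic : (∏ x ∈ s, (X - C x)).Monic := monic_prod_of_monic _ _ fun x _ => monic_X_sub_C x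
  have hqdeg : (∏ x ∈ s, (X - C x)).natDegree = n := by
    rw [natDegree_prod _ _ fun x _ => X_sub_C_ne_zero x]
    simp [hcard]
  have hv0 : v ≠ 0 := by rintro rfl; rw [mul_zero] at hv; exact hp0 hv
  have hvdeg : v.natDegree = 0 := by
    have := natDegree_mul (hqmonic.ne_zero) hv0
    rw [← hv, hdeg, hqdeg] at this
    omega
  have hvmonic : v.Monic := hqmonic.of_mul_monic_left (hv ▸ hm)
  have hv1 : v = 1 := eq_one_of_monic_natDegree_zero hvmonic hvdeg
  rw [hv1, mul_one] at hv
  rw [hv, hs_def, Finset.prod_image (fun x _ y _ h => hinj h)]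

theorem H_real_roots (n : ℕ) : ∃ r : Fin n → ℝ, StrictMono r ∧ H n = ∏ i, (X - C (r i)) := by
  induction n with
  | zero =>
    refine ⟨Fin.elim0, fun a => a.elim0, ?_⟩
    unfold H
    rw [hermite_zero, map_C]
    simp
  | succ n ih =>
    match n, ih with
    | 0, _ =>
      refine ⟨fun _ => 0, fun a b hab => absurd hab (by have := a.isLt; have := b.isLt; rw [Fin.lt_def]; omega), ?_⟩
      unfold H
      rw [hermite_one, map_X]
      simp
    | (m+1), ih =>
      set n := m + 1 with hn_def
      have hn : 0 < n := Nat.succ_pos m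
      obtain ⟨r, hmono, hfull⟩ := ih
      set p := H (n+1) with hp_def
      have hmonp : p.Monic := H_monic (n+1)
      have hdegp : p.natDegree = n+1 := H_natDegree (n+1)
      have hdegpos : 0 < p.degree := by
        rw [degree_eq_natDegree hmonp.ne_zero, hdegp]
        exact_mod_cast Nat.succ_pos n
      -- sign of p at the roots of H n
      have hE : ∀ i : Fin n, 0 < (-1:ℝ)^(n - i.val) * eval (r i) p := by
        intro i
        have h1 := prod_diff_sign hmono i
        have h2 := eval_H_succ_at_root hfull i
        rw [hp_def, h2, show n - i.val = (n - 1 - i.val) + 1 from by omega, pow_succ]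
        have heq : (-1:ℝ)^(n - 1 - i.val) * (-1) * -(∏ j ∈ Finset.univ.erase i, (r i - r j))
            = (-1:ℝ)^(n - 1 - i.val) * (∏ j ∈ Finset.univ.erase i, (r i - r j)) := by ring
        rw [heq]
        exact h1
      -- a point above all roots where p is positive
      have ht : Filter.Tendsto (fun x => eval x p) Filter.atTop Filter.atTop :=
        p.tendsto_atTop_of_leadingCoeff_nonneg hdegpos (by rw [hmonp.leadingCoeff]; norm_num)
      obtain ⟨b, hb2, hb1⟩ :=
        ((ht.eventually (Filter.eventually_gt_atTop 0)).and
          (Filter.eventually_gt_atTop (r ⟨n-1, by omega⟩))).exists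
      -- a point below all roots with the right sign
      set q : Polynomial ℝ := C ((-1:ℝ)^(n+1)) * p.comp (-X) with hq_def
      have hqeval : ∀ x : ℝ, eval x q = (-1:ℝ)^(n+1) * eval (-x) p := by
        intro x; simp [hq_def, eval_comp]
      have hqlead : q.leadingCoeff = 1 := by
        rw [hq_def, leadingCoeff_mul, leadingCoeff_C,
          leadingCoeff_comp (by simp : (-X : Polynomial ℝ).natDegree ≠ 0)]
        simp [hmonp.leadingCoeff, hdegp, ← mul_pow]
      have hq0 : q ≠ 0 := fun h => by simp [h] at hqlead
      have hqdeg : q.natDegree = n+1 := by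
        rw [hq_def, natDegree_C_mul (by positivity : ((-1:ℝ)^(n+1)) ≠ 0), natDegree_comp]
        simp [hdegp]
      have hqdegpos : 0 < q.degree := by
        rw [degree_eq_natDegree hq0, hqdeg]
        exact_mod_cast Nat.succ_pos n
      have htq : Filter.Tendsto (fun x => eval x q) Filter.atTop Filter.atTop :=
        q.tendsto_atTop_of_leadingCoeff_nonneg hqdegpos (by rw [hqlead]; norm_num)
      obtain ⟨x0, hx02, hx01⟩ :=
        ((htq.eventually (Filter.eventually_gt_atTop 0)).and
          (Filter.eventually_gt_atTop (-(r ⟨0, hn⟩)))).exists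
      set b' := -x0 with hb'_def
      have hb'lt : b' < r ⟨0, hn⟩ := by rw [hb'_def]; linarith
      have hb'sign : 0 < (-1:ℝ)^(n+1) * eval b' p := by
        have := hqeval x0
        rw [this] at hx02
        exact hx02
      -- bottom root
      have hbotopp : eval b' p * eval (r ⟨0, hn⟩) p < 0 := by
        have h1 := hE ⟨0, hn⟩
        simp only [show (⟨0, hn⟩ : Fin n).val = 0 from rfl, Nat.sub_zero] at h1
        have hmul := mul_pos hb'sign h1
        have hodd : (-1:ℝ)^(n+1) * (-1:ℝ)^n = -1 := by
          rw [← pow_add]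
          exact Odd.neg_one_pow ⟨n, by ring⟩
        have heq : ((-1:ℝ)^(n+1) * eval b' p) * ((-1:ℝ)^n * eval (r ⟨0, hn⟩) p)
            = ((-1:ℝ)^(n+1) * (-1:ℝ)^n) * (eval b' p * eval (r ⟨0, hn⟩) p) := by ring
        rw [heq, hodd] at hmul
        linarith
      obtain ⟨c0, hc0mem, hc0⟩ := ivt_poly hb'lt hbotopp
      -- upper bounds for each root
      set u : Fin n → ℝ := fun i => if h : i.val + 1 < n then r ⟨i.val+1, h⟩ else b with hu_def
      have hru : ∀ i, r i < u i := by
        intro i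
        rw [hu_def]
        dsimp only
        split
        · exact hmono (by simp [Fin.lt_def])
        · next h =>
          have : i = ⟨n-1, by omega⟩ := by
            apply Fin.ext
            show i.val = n - 1
            have := i.isLt
            omega
          rw [this]
          exact hb1
      have husign : ∀ i : Fin n, 0 < (-1:ℝ)^(n - i.val - 1) * eval (u i) p := by
        intro i
        rw [hu_def]
        dsimp only
        split
        · next h =>
          have := hE ⟨i.val+1, h⟩
          simpa [show n - (i.val+1) = n - i.val - 1 from by omega] using this
        · next h =>
          have hi : i.val = n - 1 := by have := i.isLt; omega
          rw [show n - i.val - 1 = 0 from by omega, pow_zero, one_mul]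
          exact hb2
      have hopp : ∀ i : Fin n, eval (r i) p * eval (u i) p < 0 := by
        intro i
        have h1 := hE i
        have h2 := husign i
        have hmul := mul_pos h1 h2
        have hodd : (-1:ℝ)^(n - i.val) * (-1:ℝ)^(n - i.val - 1) = -1 := by
          rw [← pow_add]
          exact Odd.neg_one_pow ⟨n - i.val - 1, by have := i.isLt; omega⟩
        have heq : ((-1:ℝ)^(n - i.val) * eval (r i) p) * ((-1:ℝ)^(n - i.val - 1) * eval (u i) p)
            = ((-1:ℝ)^(n - i.val) * (-1:ℝ)^(n - i.val - 1)) * (eval (r i) p * eval (u i) p) := by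
          ring
        rw [heq, hodd] at hmul
        linarith
      have hex : ∀ i : Fin n, ∃ x, x ∈ Set.Ioo (r i) (u i) ∧ eval x p = 0 := by
        intro i
        obtain ⟨x, h1, h2⟩ := ivt_poly (hru i) (hopp i)
        exact ⟨x, h1, h2⟩
      choose c hcmem hcroot using hex
      -- assemble the new root vector
      set r' : Fin (n+1) → ℝ := fun j =>
        if h : j.val = 0 then c0 else c ⟨j.val - 1, by have := j.isLt; omega⟩ with hr'_def
      have hr'mono : StrictMono r' := by
        rw [Fin.strictMono_iff_lt_succ]
        intro i
        have hsuccval : (i.succ : Fin (n+1)).val = i.val + 1 := rfl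
        have hcastval : (i.castSucc : Fin (n+1)).val = i.val := rfl
        rw [hr'_def]
        dsimp only
        rw [dif_neg (by omega : ¬ (i.succ : Fin (n+1)).val = 0)]
        by_cases hi0 : i.val = 0
        · rw [dif_pos (by omega : (i.castSucc : Fin (n+1)).val = 0)]
          have e1 : c0 < r ⟨0, hn⟩ := hc0mem.2
          have e2 : r ⟨0, hn⟩ < c ⟨0, hn⟩ := (hcmem ⟨0, hn⟩).1
          have hidx : (⟨(i.succ : Fin (n+1)).val - 1, by have := i.isLt; omega⟩ : Fin n) = ⟨0, hn⟩ := by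
            apply Fin.ext; simp [hsuccval, hi0]
          rw [hidx]
          linarith
        · rw [dif_neg (by omega : ¬ (i.castSucc : Fin (n+1)).val = 0)]
          have hiv := i.isLt
          set j1 : Fin n := ⟨(i.castSucc : Fin (n+1)).val - 1, by omega⟩ with hj1
          set j2 : Fin n := ⟨(i.succ : Fin (n+1)).val - 1, by omega⟩ with hj2
          have hj2v : j2 = ⟨i.val, hiv⟩ := by apply Fin.ext; simp [hj2, hsuccval]
          have hlt1 : c j1 < u j1 := (hcmem j1).2
          have huj1 : u j1 = r ⟨i.val, hiv⟩ := by
            rw [hu_def]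
            dsimp only
            rw [dif_pos (by simp [hj1, hcastval]; omega : (j1:Fin n).val + 1 < n)]
            congr 1
            apply Fin.ext
            simp [hj1, hcastval]
            omega
          have hlt2 : r ⟨i.val, hiv⟩ < c ⟨i.val, hiv⟩ := (hcmem ⟨i.val, hiv⟩).1
          rw [hj2v]
          calc c j1 < u j1 := hlt1
            _ = r ⟨i.val, hiv⟩ := huj1
            _ < c ⟨i.val, hiv⟩ := hlt2
      have hr'root : ∀ j : Fin (n+1), p.IsRoot (r' j) := by
        intro j
        rw [hr'_def]
        dsimp only
        split
        · exact hc0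
        · exact hcroot _
      refine ⟨r', hr'mono, ?_⟩
      exact eq_prod_of_monic_of_roots hmonp hdegp hr'mono.injective hr'root



-- nat factorial identity
lemma nat_fact_identity {d k : ℕ} (hk : 2*k ≤ d) :
    k ! * (d - 2*k)! * (2^k * (2*k-1)‼ * d.choose (d - 2*k)) = d ! := by
  have h1 : (2*k)! = 2^k * k ! * (2*k-1)‼ := by
    rcases Nat.eq_zero_or_pos k with hk0 | hk0
    · subst hk0; simp
    · have h2 : 2*k - 1 + 1 = 2*k := by omega
      have h5 := Nat.factorial_eq_mul_doubleFactorial (2*k - 1)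
      rw [h2] at h5
      rw [h5, Nat.doubleFactorial_two_mul]
  have h3 : d.choose (d - 2*k) = d.choose (2*k) := Nat.choose_symm hk
  have h4 := Nat.choose_mul_factorial_mul_factorial hk
  calc k ! * (d - 2*k)! * (2^k * (2*k-1)‼ * d.choose (d - 2*k))
      = d.choose (2*k) * (2^k * k ! * (2*k-1)‼) * (d - 2*k)! := by rw [h3]; ring
    _ = d.choose (2*k) * (2*k)! * (d - 2*k)! := by rw [← h1]
    _ = d ! := h4

-- sum form of hermite evaluated in ℂ
lemma aeval_hermite_eq_sum (d : ℕ) (w : ℂ) :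
    (aeval w) (hermite d) = ∑ k ∈ Finset.range (d/2 + 1),
      ((((-1)^k * (2*k-1)‼ * d.choose (d - 2*k) : ℤ)) : ℂ) * w^(d - 2*k) := by
  rw [aeval_eq_sum_range, natDegree_hermite]
  have himage : Finset.range (d + 1) ⊇
      Finset.image (fun k => d - 2*k) (Finset.range (d/2 + 1)) := by
    intro i hi
    simp only [Finset.mem_image, Finset.mem_range] at hi ⊢
    obtain ⟨k, hk, rfl⟩ := hi
    omega
  rw [← Finset.sum_subset himage]
  · rw [Finset.sum_image (by intro x hx y hy h; simp only [Finset.mem_coe, Finset.mem_range] at hx hy h; omega)]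
    apply Finset.sum_congr rfl
    intro k hk
    simp only [Finset.mem_range] at hk
    have h2k : 2*k ≤ d := by omega
    have heven : Even (d + (d - 2*k)) := by
      refine ⟨d - k, by omega⟩
    rw [coeff_hermite_of_even_add heven]
    rw [show d - (d - 2*k) = 2*k from by omega]
    rw [show 2*k/2 = k from by omega]
    rw [show 2*k - 1 = 2*k - 1 from rfl]
    push_cast
    rw [zsmul_eq_mul]
    push_cast
    ring
  · intro i hi hnotim
    simp only [Finset.mem_range] at hi
    have hodd : Odd (d + i) := by
      by_contra hodd
      rw [Nat.not_odd_iff_even] at hodd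
      apply hnotim
      simp only [Finset.mem_image, Finset.mem_range]
      obtain ⟨m, hm⟩ := hodd
      refine ⟨(d - i)/2, by omega, by omega⟩
    rw [coeff_hermite_of_odd_add hodd]
    simp

lemma eval_expD_eq_prod (β : ℝ) (hβ : 0 < β) (d : ℕ) {r : Fin d → ℝ}
    (hfull : H d = ∏ i, (X - C (r i))) (z : ℂ) :
    eval z (expD (β:ℂ) 2 d) =
      ∏ i, (z - (Complex.I * (Real.sqrt (2*β) : ℂ)) * ((r i : ℝ) : ℂ)) := by
  set a : ℝ := Real.sqrt (2*β) with ha_def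
  have ha : 0 < a := Real.sqrt_pos.2 (by linarith)
  have ha2 : ((a:ℂ))^2 = 2*(β:ℂ) := by
    have h : a^2 = 2*β := Real.sq_sqrt (by linarith)
    calc ((a:ℂ))^2 = (((a^2 : ℝ)):ℂ) := by push_cast; ring
      _ = (((2*β : ℝ)):ℂ) := by rw [h]
      _ = 2*(β:ℂ) := by push_cast; ring
  have hIa : Complex.I * (a:ℂ) ≠ 0 :=
    mul_ne_zero Complex.I_ne_zero (by exact_mod_cast ha.ne')
  set w : ℂ := z / (Complex.I * (a:ℂ)) with hw_def
  have hz : z = Complex.I * (a:ℂ) * w := by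
    rw [hw_def]; field_simp; rw [mul_div_assoc, div_self (by exact_mod_cast ha.ne'), mul_one]
  have hherm : ∀ v : ℂ, (aeval v) (hermite d) = ∏ i, (v - ((r i : ℝ) : ℂ)) := by
    intro v
    have hmap : (hermite d).map (Int.castRingHom ℂ) = (H d).map (algebraMap ℝ ℂ) := by
      unfold H
      rw [Polynomial.map_map]
      congr 1
    have h1 : (aeval v) (hermite d) = eval v ((hermite d).map (Int.castRingHom ℂ)) := by
      rw [eval_map]
      rfl
    rw [h1, hmap, hfull, Polynomial.map_prod, eval_prod]
    apply Finset.prod_congr rfl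
    intro i _
    simp
  unfold expD
  rw [eval_finset_sum]
  have key : ∑ k ∈ Finset.range (d/2+1),
        eval z (C ((d ! : ℂ) * (β:ℂ)^k / ((k ! : ℂ) * ((d - 2*k)! : ℂ))) * X ^ (d - 2*k))
      = (Complex.I * (a:ℂ))^d * ∑ k ∈ Finset.range (d/2+1),
        ((((-1)^k * (2*k-1)‼ * d.choose (d - 2*k) : ℤ)) : ℂ) * w^(d-2*k) := by
    rw [Finset.mul_sum]
    apply Finset.sum_congr rfl
    intro k hk
    simp only [Finset.mem_range] at hk
    have h2k : 2*k ≤ d := by omega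
    rw [eval_mul, eval_C, eval_pow, eval_X, hz, mul_pow (Complex.I * (a:ℂ)) w (d - 2*k)]
    have hsplit : (Complex.I * (a:ℂ))^d
        = (Complex.I*(a:ℂ))^(d-2*k) * ((Complex.I*(a:ℂ))^2)^k := by
      rw [← pow_mul, ← pow_add]
      congr 1
      omega
    rw [hsplit]
    have hIa2 : (Complex.I*(a:ℂ))^2 = -(2*(β:ℂ)) := by
      rw [mul_pow, Complex.I_sq, ha2]; ring
    rw [hIa2]
    have hden : ((k ! : ℂ) * ((d - 2*k)! : ℂ)) ≠ 0 :=
      mul_ne_zero (Nat.cast_ne_zero.2 (Nat.factorial_ne_zero k))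
        (Nat.cast_ne_zero.2 (Nat.factorial_ne_zero (d - 2*k)))
    have hnatC : ((k ! : ℂ)) * (((d-2*k)! : ℂ)) * ((2:ℂ)^k * (((2*k-1)‼ : ℕ) : ℂ) * ((d.choose (d-2*k) : ℕ) : ℂ)) = ((d ! : ℕ) : ℂ) := by
      have := nat_fact_identity (d := d) (k := k) h2k
      exact_mod_cast congrArg (fun m : ℕ => (m : ℂ)) this
    have hcoef : (d ! : ℂ) * (β:ℂ)^k / ((k ! : ℂ) * ((d - 2*k)! : ℂ))
        = (-(2*(β:ℂ)))^k * ((((-1)^k * (2*k-1)‼ * d.choose (d - 2*k) : ℤ)) : ℂ) := by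
      rw [div_eq_iff hden]
      have hInt : ((((-1)^k * (2*k-1)‼ * d.choose (d - 2*k) : ℤ)) : ℂ)
          = (-1:ℂ)^k * (((2*k-1)‼ : ℕ) : ℂ) * ((d.choose (d-2*k) : ℕ) : ℂ) := by
        push_cast
        ring
      rw [hInt]
      have hx : (-(2*(β:ℂ)))^k = (-1:ℂ)^k * (2:ℂ)^k * (β:ℂ)^k := by
        rw [show (-(2*(β:ℂ))) = (-1) * 2 * (β:ℂ) from by ring, mul_pow, mul_pow]
      rw [hx]
      have hneg : (-1:ℂ)^k * (-1:ℂ)^k = 1 := by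
        rw [← mul_pow]; norm_num
      linear_combination (-(β:ℂ)^k) * hnatC +
        (-((2:ℂ)^k * (β:ℂ)^k * (((2*k-1)‼ : ℕ) : ℂ) * ((d.choose (d-2*k) : ℕ) : ℂ) *
          (k ! : ℂ) * ((d-2*k)! : ℂ))) * hneg
    rw [hcoef]
    ring
  rw [key, ← aeval_hermite_eq_sum, hherm w, hz]
  have hconst : (Complex.I*(a:ℂ))^d = ∏ _i : Fin d, (Complex.I*(a:ℂ)) := by
    rw [Finset.prod_const, Finset.card_univ, Fintype.card_fin]
  rw [hconst, ← Finset.prod_mul_distrib]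
  apply Finset.prod_congr rfl
  intro i _
  ring

end Aux

/-- If `β > 0` then `exp(βD²)M^d` has exactly `2⌊d/2⌋` distinct purely imaginary zeros,
and every nonzero zero of `exp(βD²)M^d` is purely imaginary. -/
theorem stmt6 (β : ℝ) (hβ : 0 < β) (d : ℕ) (hd : 0 < d) :
    {z : ℂ | (expD (β : ℂ) 2 d).IsRoot z ∧ z.re = 0 ∧ z ≠ 0}.ncard = 2 * (d / 2) ∧
      ∀ z : ℂ, (expD (β : ℂ) 2 d).IsRoot z → z ≠ 0 → z.re = 0 := by
  classical
  obtain ⟨r, hmono, hfull⟩ := H_real_roots d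
  have ha : 0 < Real.sqrt (2*β) := Real.sqrt_pos.2 (by linarith)
  have hIa : (Complex.I * ((Real.sqrt (2*β) : ℝ) : ℂ)) ≠ 0 :=
    mul_ne_zero Complex.I_ne_zero (by exact_mod_cast ha.ne')
  have hkey := eval_expD_eq_prod β hβ d hfull
  have hroot_iff : ∀ z : ℂ, (expD (β:ℂ) 2 d).IsRoot z ↔
      ∃ i, z = Complex.I * ((Real.sqrt (2*β) : ℝ) : ℂ) * ((r i : ℝ) : ℂ) := by
    intro z
    rw [IsRoot, hkey z, Finset.prod_eq_zero_iff]
    constructor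
    · rintro ⟨i, _, hi⟩
      exact ⟨i, sub_eq_zero.1 hi⟩
    · rintro ⟨i, hi⟩
      exact ⟨i, Finset.mem_univ i, by rw [hi]; ring⟩
  have hre : ∀ i, (Complex.I * ((Real.sqrt (2*β) : ℝ) : ℂ) * ((r i : ℝ) : ℂ)).re = 0 := by
    intro i
    simp
  have hsecond : ∀ z : ℂ, (expD (β:ℂ) 2 d).IsRoot z → z ≠ 0 → z.re = 0 := by
    intro z hz _
    obtain ⟨i, rfl⟩ := (hroot_iff z).1 hz
    exact hre i
  refine ⟨?_, hsecond⟩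
  set T : Finset (Fin d) := Finset.univ.filter (fun i => r i ≠ 0) with hT
  have hginj : ∀ i j : Fin d,
      Complex.I * ((Real.sqrt (2*β) : ℝ) : ℂ) * ((r i : ℝ) : ℂ)
        = Complex.I * ((Real.sqrt (2*β) : ℝ) : ℂ) * ((r j : ℝ) : ℂ) → i = j := by
    intro i j h
    apply hmono.injective
    have := mul_left_cancel₀ hIa h
    exact_mod_cast this
  have hset : {z : ℂ | (expD (β:ℂ) 2 d).IsRoot z ∧ z.re = 0 ∧ z ≠ 0}
      = ↑(T.image (fun i => Complex.I * ((Real.sqrt (2*β) : ℝ) : ℂ) * ((r i : ℝ) : ℂ))) := by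
    ext z
    simp only [Set.mem_setOf_eq, Finset.coe_image, Set.mem_image, Finset.mem_coe, hT,
      Finset.mem_filter, Finset.mem_univ, true_and]
    constructor
    · rintro ⟨hz, _, hz0⟩
      obtain ⟨i, rfl⟩ := (hroot_iff _).1 hz
      refine ⟨i, ?_, rfl⟩
      intro h0
      apply hz0
      rw [h0]
      simp
    · rintro ⟨i, hi0, rfl⟩
      exact ⟨(hroot_iff _).2 ⟨i, rfl⟩, hre i,
        mul_ne_zero hIa (by exact_mod_cast hi0)⟩
  rw [hset, Set.ncard_coe_finset,
    Finset.card_image_of_injOn (fun i _ j _ h => hginj i j h)]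
  rcases Nat.even_or_odd d with hev | hod
  · have hc : ((hermite d).coeff 0) ≠ 0 := by
      rw [coeff_hermite_of_even_add (by simpa using hev)]
      refine mul_ne_zero (mul_ne_zero (pow_ne_zero _ (by norm_num)) ?_) ?_
      · exact_mod_cast (Nat.doubleFactorial_pos _).ne'
      · simp
    have hall : ∀ i, r i ≠ 0 := by
      intro i hri
      have h0 : eval (0:ℝ) (H d) = 0 := by
        rw [hfull, eval_prod]
        apply Finset.prod_eq_zero (Finset.mem_univ i)
        rw [eval_sub, eval_X, eval_C, hri]
        ring
      have h1 : eval (0:ℝ) (H d) = ((hermite d).coeff 0 : ℝ) := by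
        unfold H
        rw [← coeff_zero_eq_eval_zero, coeff_map]
        rfl
      rw [h1] at h0
      exact hc (by exact_mod_cast h0)
    have hTu : T = Finset.univ := by
      rw [hT]
      apply Finset.filter_true_of_mem
      intro i _
      exact hall i
    rw [hTu, Finset.card_univ, Fintype.card_fin]
    obtain ⟨m, hm⟩ := hev
    omega
  · have hc0 : ((hermite d).coeff 0) = 0 := coeff_hermite_of_odd_add (by simpa using hod)
    have h0 : eval (0:ℝ) (H d) = 0 := by
      unfold H
      rw [← coeff_zero_eq_eval_zero, coeff_map, hc0]
      simp
    rw [hfull, eval_prod] at h0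
    obtain ⟨i0, _, hi0⟩ := Finset.prod_eq_zero_iff.1 h0
    have hi0' : r i0 = 0 := by
      rw [eval_sub, eval_X, eval_C] at hi0
      linarith
    have hTe : T = Finset.univ.erase i0 := by
      ext j
      simp only [hT, Finset.mem_filter, Finset.mem_univ, true_and, Finset.mem_erase, and_true]
      constructor
      · intro hj h
        exact hj (h ▸ hi0')
      · intro hj h
        exact hj (hmono.injective (h.trans hi0'.symm))
    rw [hTe, Finset.card_erase_of_mem (Finset.mem_univ i0), Finset.card_univ, Fintype.card_fin]
    obtain ⟨m, hm⟩ := hod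
    omega
end

section
/- If β is a nonzero real number and p, d are integers with 3 ≤ p ≤ d, then the polynomial exp(βD^p)M^d has at least one nonreal complex zero. -/
open Polynomial Nat

-- auxiliary lemmas
lemma my_esymm_one (s : Multiset ℂ) : s.esymm 1 = s.sum := by
  simp [Multiset.esymm, Multiset.powersetCard_one, Multiset.map_map]

lemma my_esymm_cons (a : ℂ) (s : Multiset ℂ) (n : ℕ) :
    (a ::ₘ s).esymm (n+1) = s.esymm (n+1) + a * s.esymm n := by
  simp [Multiset.esymm, Multiset.powersetCard_cons, Multiset.map_map, Multiset.sum_map_mul_left]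

lemma my_sq_sum (s : Multiset ℂ) : s.sum ^ 2 = (s.map (· ^ 2)).sum + 2 * s.esymm 2 := by
  induction s using Multiset.induction with
  | empty => simp [Multiset.esymm, Multiset.powersetCard_zero_right]
  | cons a s ih =>
    rw [Multiset.sum_cons, Multiset.map_cons, Multiset.sum_cons, my_esymm_cons, my_esymm_one]
    ring_nf
    rw [ih]
    ring

/-- If `β ≠ 0` is real and `3 ≤ p ≤ d`, then `exp(βD^p)M^d` has a nonreal zero. -/
theorem stmt7 (β : ℝ) (hβ : β ≠ 0) (p d : ℕ) (hp : 3 ≤ p) (hpd : p ≤ d) :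
    ∃ z : ℂ, (expD (β : ℂ) p d).IsRoot z ∧ z.im ≠ 0 := by
  set c : ℕ → ℂ := fun k => (d ! : ℂ) * (β : ℂ) ^ k / ((k ! : ℂ) * ((d - p * k)! : ℂ)) with hc
  set q := expD (β : ℂ) p d with hq
  have hd0 : 0 < d := by omega
  have hkle : ∀ k ∈ Finset.range (d / p + 1), p * k ≤ d := by
    intro k hk
    rw [Finset.mem_range] at hk
    calc p * k ≤ p * (d / p) := Nat.mul_le_mul_left p (by omega)
    _ ≤ d := Nat.mul_div_le d p
  have hcoeff : ∀ n, q.coeff n =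
      ∑ k ∈ Finset.range (d / p + 1), if d - p * k = n then c k else 0 := by
    intro n
    rw [hq, expD, finset_sum_coeff]
    refine Finset.sum_congr rfl fun k _ => ?_
    rw [coeff_C_mul, coeff_X_pow]
    simp only [hc, mul_ite, mul_one, mul_zero]
    exact if_congr eq_comm rfl rfl
  have hcd : q.coeff d = 1 := by
    rw [hcoeff]
    rw [Finset.sum_eq_single 0]
    · have hne : (d ! : ℂ) ≠ 0 := by exact_mod_cast d.factorial_ne_zero
      simp [hc, hne]
    · intro k hk hk0
      have h1 := hkle k hk
      have h2 : p ≤ p * k := Nat.le_mul_of_pos_right p (by omega)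
      rw [if_neg]
      omega
    · intro h; simp at h
  have hdegle : q.natDegree ≤ d := by
    rw [hq, expD]
    refine natDegree_sum_le_of_forall_le _ _ fun k hk => ?_
    exact le_trans (natDegree_C_mul_le _ _) (by simpa using le_trans natDegree_X_pow_le (Nat.sub_le d _))
  have hmonic : q.Monic := monic_of_natDegree_le_of_coeff_eq_one d hdegle hcd
  have hdeg : q.natDegree = d :=
    le_antisymm hdegle (le_natDegree_of_ne_zero (by rw [hcd]; exact one_ne_zero))
  have hq0 : q ≠ 0 := hmonic.ne_zero
  -- coefficients at d-1, d-2 vanish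
  have hvanish : ∀ j, 0 < j → j < p → q.coeff (d - j) = 0 := by
    intro j hj0 hjp
    rw [hcoeff]
    refine Finset.sum_eq_zero fun k hk => ?_
    have h1 := hkle k hk
    rw [if_neg]
    rcases Nat.eq_zero_or_pos k with rfl | hk
    · omega
    · have h2 : p ≤ p * k := Nat.le_mul_of_pos_right p hk
      omega
  -- coefficient at d - p is nonzero
  have hcdp : q.coeff (d - p) = c 1 := by
    rw [hcoeff]
    rw [Finset.sum_eq_single 1]
    · simp
    · intro k hk hk1
      have h1 := hkle k hk
      rw [if_neg]
      rcases k with _ | _ | k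
      · omega
      · omega
      · have h2 : 2 * p ≤ p * (k + 1 + 1) := by nlinarith
        omega
    · intro h
      exfalso; apply h
      rw [Finset.mem_range]
      have : 1 ≤ d / p := (Nat.one_le_div_iff (by omega)).mpr hpd
      omega
  have hc1 : c 1 ≠ 0 := by
    apply div_ne_zero
    · exact mul_ne_zero (by exact_mod_cast Nat.factorial_ne_zero d)
        (by simpa using Complex.ofReal_ne_zero.mpr hβ)
    · exact mul_ne_zero (by exact_mod_cast Nat.factorial_ne_zero 1)
        (by exact_mod_cast Nat.factorial_ne_zero (d - p * 1))
  -- roots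
  have hsplits : q.Splits := IsAlgClosed.splits q
  have hcard : q.roots.card = q.natDegree := (splits_iff_card_roots).mp hsplits
  have he1 : q.roots.esymm 1 = 0 := by
    have := Polynomial.coeff_eq_esymm_roots_of_card hcard (k := d - 1) (by omega)
    rw [hvanish 1 (by omega) (by omega), hmonic.leadingCoeff, hdeg] at this
    have h1 : d - (d - 1) = 1 := by omega
    rw [h1] at this
    simpa using this.symm
  have he2 : q.roots.esymm 2 = 0 := by
    have := Polynomial.coeff_eq_esymm_roots_of_card hcard (k := d - 2) (by omega)
    rw [hvanish 2 (by omega) (by omega), hmonic.leadingCoeff, hdeg] at this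
    have h1 : d - (d - 2) = 2 := by omega
    rw [h1] at this
    simpa using this.symm
  have hsumsq : (q.roots.map (· ^ 2)).sum = 0 := by
    have := my_sq_sum q.roots
    rw [← my_esymm_one, he1, he2] at this
    simpa using this.symm
  by_contra hcon
  push_neg at hcon
  have hreal : ∀ z ∈ q.roots, z.im = 0 := fun z hz =>
    hcon z (isRoot_of_mem_roots hz)
  -- all roots are zero
  have hallzero : ∀ z ∈ q.roots, z = 0 := by
    have hre : (q.roots.map fun z => (z ^ 2).re).sum = 0 := by
      have h := congrArg Complex.re hsumsq
      rw [show Complex.re = (Complex.reAddGroupHom : ℂ → ℝ) from rfl,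
        AddMonoidHom.map_multiset_sum, Multiset.map_map] at h
      simpa [Complex.reAddGroupHom] using h
    have hnn : ∀ x ∈ q.roots.map fun z => (z ^ 2).re, 0 ≤ x := by
      intro x hx
      rw [Multiset.mem_map] at hx
      obtain ⟨z, hz, rfl⟩ := hx
      have : (z ^ 2).re = z.re ^ 2 - z.im ^ 2 := by
        rw [pow_two, Complex.mul_re]; ring
      rw [this, hreal z hz]
      simpa using sq_nonneg z.re
    intro z hz
    have hmem : (z ^ 2).re ∈ q.roots.map fun z => (z ^ 2).re :=
      Multiset.mem_map_of_mem _ hz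
    have hle := Multiset.single_le_sum hnn _ hmem
    rw [hre] at hle
    have hzre : (z ^ 2).re = z.re ^ 2 - z.im ^ 2 := by
      rw [pow_two, Complex.mul_re]; ring
    rw [hzre, hreal z hz] at hle
    have : z.re = 0 := by nlinarith
    exact Complex.ext this (hreal z hz)
  -- hence q = X ^ d
  have hqX : q = X ^ d := by
    have := hsplits.eq_prod_roots_of_monic hmonic
    rw [this]
    have hmapeq : q.roots.map (fun a => X - C a) = q.roots.map (fun _ => (X : ℂ[X])) := by
      refine Multiset.map_congr rfl fun z hz => ?_
      rw [hallzero z hz]; simp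
    rw [hmapeq, Multiset.map_const', Multiset.prod_replicate, hcard, hdeg]
  have : q.coeff (d - p) = 0 := by
    rw [hqX, coeff_X_pow]
    simp only [ite_eq_right_iff]
    intro h; omega
  rw [hcdp] at this
  exact hc1 this
end

section
/- Let ⟨Bₙ⟩ be an increasing sequence of positive real numbers with Bₘ·Bₙ ≤ B₀·B_{m+n} for all m, n ≥ 0, and let φ be a formal power series with complex coefficients satisfying φ ≺ ⟨n!Bₙ⟩. Suppose f is an entire function and ⟨f_N⟩ is a sequence of entire functions with f_N ≪ ⟨(n!Bₙ)^{−1}⟩ for every N, such that f_N → f uniformly on compact subsets of ℂ. Then for every positive integer m one has φ^m ≺ ⟨n!Bₙ⟩, all f_N and f belong to dom φ(D)^m, and φ(D)^m f_N → φ(D)^m f uniformly on compact subsets of ℂ as N → ∞. -/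
open Nat

/-- `domSeq phi f g` : the partial sums of `∑ₙ (coeff n phi)·f⁽ⁿ⁾` converge to `g`
uniformly on compact subsets of `ℂ`; i.e. `f ∈ dom phi(D)` and `phi(D)f = g`. -/
def domSeq (phi : PowerSeries ℂ) (f g : ℂ → ℂ) : Prop :=
  TendstoLocallyUniformly
    (fun (N : ℕ) (z : ℂ) =>
      ∑ n ∈ Finset.range N, (PowerSeries.coeff n) phi * iteratedDeriv n f z)
    g Filter.atTop

/-- `domIter phi m f g` : `f ∈ dom phi(D)^m` and `phi(D)^m f = g`. -/
def domIter (phi : PowerSeries ℂ) (m : ℕ) (f g : ℂ → ℂ) : Prop :=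
  ∃ F : ℕ → ℂ → ℂ, F 0 = f ∧ (∀ k < m, domSeq phi (F k) (F (k + 1))) ∧ F m = g

/-- `phi ≺ ⟨n!Bₙ⟩` for a formal power series `phi`. -/
def psPrec (B : ℕ → ℝ) (phi : PowerSeries ℂ) : Prop :=
  ∃ c : ℝ, 0 < c ∧ ∃ e : ℝ, 0 ≤ e ∧ ∀ n : ℕ,
    ‖(n ! : ℂ) * (PowerSeries.coeff n) phi‖ <
      c * (1 + (n : ℝ)) ^ e * ((n ! : ℝ) * B n)

open Filter Metric



lemma entire_iteratedDeriv {f : ℂ → ℂ} (hf : Differentiable ℂ f) (n : ℕ) :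
    Differentiable ℂ (iteratedDeriv n f) :=
  (hf.contDiff (n := ⊤)).differentiable_iteratedDeriv n (by exact_mod_cast lt_top_iff_ne_top.2 (by simp))

lemma iteratedDeriv_iteratedDeriv (f : ℂ → ℂ) (n k : ℕ) :
    iteratedDeriv n (iteratedDeriv k f) = iteratedDeriv (n + k) f := by
  simp only [iteratedDeriv_eq_iterate, Function.iterate_add_apply]

lemma iteratedDeriv_cmul {f : ℂ → ℂ} (hf : Differentiable ℂ f) (c : ℂ) (n : ℕ) :
    iteratedDeriv n (fun z => c * f z) = fun z => c * iteratedDeriv n f z := by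
  induction n with
  | zero => simp
  | succ n ih =>
    funext z
    rw [iteratedDeriv_succ, ih, iteratedDeriv_succ]
    exact deriv_const_mul c ((entire_iteratedDeriv hf n) z)

lemma iteratedDeriv_finsum {ι : Type*} (s : Finset ι) (g : ι → ℂ → ℂ)
    (hg : ∀ i, Differentiable ℂ (g i)) (n : ℕ) :
    iteratedDeriv n (fun z => ∑ i ∈ s, g i z) = fun z => ∑ i ∈ s, iteratedDeriv n (g i) z := by
  induction n generalizing g with
  | zero => simp
  | succ n ih =>
    rw [iteratedDeriv_succ']
    have h1 : deriv (fun z => ∑ i ∈ s, g i z) = fun z => ∑ i ∈ s, deriv (g i) z := by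
      funext z
      exact deriv_fun_sum (fun i _ => (hg i) z)
    rw [h1, ih (fun i => deriv (g i)) (fun i => by
      have := entire_iteratedDeriv (hg i) 1
      simpa [iteratedDeriv_one] using this)]
    funext z
    simp [iteratedDeriv_succ']



lemma summable_rpow_div_factorial {e : ℝ} (he : 0 ≤ e) :
    Summable (fun k : ℕ => (1 + (k : ℝ)) ^ e / k !) := by
  apply summable_of_ratio_norm_eventually_le (r := 1/2) (by norm_num)
  filter_upwards [eventually_ge_atTop ⌈(2:ℝ) ^ (e+1)⌉₊] with k hk
  have hk1 : (0:ℝ) < 1 + k := by positivity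
  have hk2 : (0:ℝ) < 1 + (k+1 : ℕ) := by positivity
  have hfac : (0:ℝ) < k ! := by exact_mod_cast Nat.factorial_pos k
  have hfac2 : ((k+1)! : ℝ) = (k+1) * k ! := by exact_mod_cast Nat.factorial_succ k
  rw [Real.norm_of_nonneg (by positivity), Real.norm_of_nonneg (by positivity)]
  have hbase : (1 + ((k+1:ℕ) : ℝ)) ≤ 2 * (1 + k) := by push_cast; linarith [Nat.cast_nonneg (α := ℝ) k]
  have h1 : (1 + ((k+1:ℕ) : ℝ)) ^ e ≤ (2:ℝ)^e * (1 + (k:ℝ)) ^ e := by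
    calc (1 + ((k+1:ℕ) : ℝ)) ^ e ≤ (2 * (1 + (k:ℝ))) ^ e :=
          Real.rpow_le_rpow (by positivity) hbase he
      _ = (2:ℝ)^e * (1 + (k:ℝ)) ^ e := Real.mul_rpow (by norm_num) (by positivity)
  have hN : (2:ℝ) ^ (e+1) ≤ (k : ℝ) + 1 := by
    have := Nat.le_ceil ((2:ℝ) ^ (e+1))
    have h2 : (⌈(2:ℝ) ^ (e+1)⌉₊ : ℝ) ≤ k := by exact_mod_cast hk
    linarith
  have h2e : (2:ℝ)^e * 2 = (2:ℝ)^(e+1) := by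
    rw [Real.rpow_add (by norm_num), Real.rpow_one]
  rw [hfac2, div_le_iff₀ (by positivity)]
  have key : (1 + ((k+1:ℕ) : ℝ)) ^ e ≤ 1/2 * (1 + (k:ℝ))^e * (k+1) := by
    calc (1 + ((k+1:ℕ) : ℝ)) ^ e ≤ (2:ℝ)^e * (1 + (k:ℝ)) ^ e := h1
      _ ≤ 1/2 * (1 + (k:ℝ))^e * (k+1) := by
          have hpow : (0:ℝ) < (1 + (k:ℝ))^e := Real.rpow_pos_of_pos hk1 e
          nlinarith [hpow]
  calc (1 + ((k+1:ℕ) : ℝ)) ^ e ≤ 1/2 * (1 + (k:ℝ))^e * (k+1) := key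
    _ = 1/2 * ((1 + (k:ℝ))^e / k !) * ((k+1) * k !) := by field_simp



lemma tendstoUniformlyOn_tsum_of_tendsto
    {u : ℕ → ℝ} (hu : Summable u) {h : ℕ → ℕ → ℂ → ℂ} {g : ℕ → ℂ → ℂ} {s : Set ℂ}
    (hb : ∀ N n z, z ∈ s → ‖h N n z‖ ≤ u n)
    (hgb : ∀ n z, z ∈ s → ‖g n z‖ ≤ u n)
    (hc : ∀ n, TendstoUniformlyOn (fun N => h N n) (g n) atTop s) :
    TendstoUniformlyOn (fun N z => ∑' n, h N n z) (fun z => ∑' n, g n z) atTop s := by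
  rcases s.eq_empty_or_nonempty with rfl | ⟨z0, hz0⟩
  · simp [TendstoUniformlyOn]
  rw [Metric.tendstoUniformlyOn_iff]
  intro ε hε
  -- choose M with small tail
  have htail := tendsto_sum_nat_add u
  have h4 : (0:ℝ) < ε/4 := by linarith
  obtain ⟨M, hM⟩ := (Metric.tendsto_atTop.1 htail (ε/4) h4) 
  have hMtail : ∑' k, u (k + M) < ε/4 := by
    have := hM M le_rfl
    rw [Real.dist_eq, sub_zero] at this
    calc ∑' k, u (k + M) ≤ |∑' k, u (k + M)| := le_abs_self _
      _ < ε/4 := this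
  set δ := ε/(4*(M+1)) with hδdef
  have hδ : 0 < δ := by positivity
  have H : ∀ᶠ N in atTop, ∀ n ∈ Finset.range M, ∀ z ∈ s, dist (g n z) (h N n z) < δ := by
    rw [eventually_all_finset]
    intro n _
    exact (Metric.tendstoUniformlyOn_iff.1 (hc n)) δ hδ
  filter_upwards [H] with N hN z hz
  have hsumh : Summable (fun n => h N n z) :=
    Summable.of_norm_bounded hu (fun n => hb N n z hz)
  have hsumg : Summable (fun n => g n z) :=
    Summable.of_norm_bounded hu (fun n => hgb n z hz)
  have hsplith := Summable.sum_add_tsum_nat_add M hsumh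
  have hsplitg := Summable.sum_add_tsum_nat_add M hsumg
  have hushift : Summable (fun k => u (k + M)) := (summable_nat_add_iff M).2 hu
  have htailh : ‖∑' k, h N (k + M) z‖ ≤ ∑' k, u (k + M) := by
    calc ‖∑' k, h N (k + M) z‖ ≤ ∑' k, ‖h N (k + M) z‖ :=
          norm_tsum_le_tsum_norm (hsumh.norm.comp_injective (add_left_injective M))
      _ ≤ ∑' k, u (k + M) :=
          Summable.tsum_le_tsum (fun k => hb N (k+M) z hz)
            (hsumh.norm.comp_injective (add_left_injective M)) hushift
  have htailg : ‖∑' k, g (k + M) z‖ ≤ ∑' k, u (k + M) := by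
    calc ‖∑' k, g (k + M) z‖ ≤ ∑' k, ‖g (k + M) z‖ :=
          norm_tsum_le_tsum_norm (hsumg.norm.comp_injective (add_left_injective M))
      _ ≤ ∑' k, u (k + M) :=
          Summable.tsum_le_tsum (fun k => hgb (k+M) z hz)
            (hsumg.norm.comp_injective (add_left_injective M)) hushift
  have hfin : ‖∑ n ∈ Finset.range M, g n z - ∑ n ∈ Finset.range M, h N n z‖ ≤ M * δ := by
    rw [← Finset.sum_sub_distrib]
    calc ‖∑ n ∈ Finset.range M, (g n z - h N n z)‖
        ≤ ∑ n ∈ Finset.range M, ‖g n z - h N n z‖ := norm_sum_le _ _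
      _ ≤ ∑ _n ∈ Finset.range M, δ := Finset.sum_le_sum (fun n hn => by
          have := hN n hn z hz
          rw [dist_eq_norm] at this
          exact this.le)
      _ = M * δ := by simp [mul_comm]
  rw [dist_eq_norm]
  have hdecomp : (∑' n, g n z) - (∑' n, h N n z) =
      (∑ n ∈ Finset.range M, g n z - ∑ n ∈ Finset.range M, h N n z)
      + (∑' k, g (k + M) z) - (∑' k, h N (k + M) z) := by
    rw [← hsplith, ← hsplitg]; ring
  have hMδ : (M:ℝ) * δ < ε/4 := by
    rw [hδdef]
    have h1 : (M:ℝ) * (ε/(4*((M:ℝ)+1))) = ε * M / (4*((M:ℝ)+1)) := by ring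
    rw [h1, div_lt_div_iff₀ (by positivity) (by norm_num)]
    nlinarith [Nat.cast_nonneg (α := ℝ) M, hε]
  calc ‖(∑' n, g n z) - (∑' n, h N n z)‖
      ≤ ‖∑ n ∈ Finset.range M, g n z - ∑ n ∈ Finset.range M, h N n z‖
        + ‖∑' k, g (k + M) z‖ + ‖∑' k, h N (k + M) z‖ := by
        rw [hdecomp]; exact (norm_sub_le _ _).trans (by gcongr; exact norm_add_le _ _)
    _ < ε/4 + ε/4 + ε/4 := by
        have h1 := lt_of_le_of_lt htailh hMtail
        have h2 := lt_of_le_of_lt htailg hMtail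
        have h3 := lt_of_le_of_lt hfin hMδ
        linarith
    _ < ε := by linarith

lemma diff_of_tlu {S : ℕ → ℂ → ℂ} {g : ℂ → ℂ}
    (hS : ∀ M, Differentiable ℂ (S M)) (h : TendstoLocallyUniformly S g atTop) :
    Differentiable ℂ g := by
  rw [← tendstoLocallyUniformlyOn_univ] at h
  have := h.differentiableOn (Eventually.of_forall (fun M => (hS M).differentiableOn)) isOpen_univ
  rwa [← differentiableOn_univ]

lemma tlu_iteratedDeriv {S : ℕ → ℂ → ℂ} {g : ℂ → ℂ}
    (hS : ∀ M, Differentiable ℂ (S M)) (h : TendstoLocallyUniformly S g atTop) (n : ℕ) :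
    TendstoLocallyUniformly (fun M => iteratedDeriv n (S M)) (iteratedDeriv n g) atTop := by
  induction n with
  | zero => simpa using h
  | succ n ih =>
    rw [← tendstoLocallyUniformlyOn_univ] at ih
    have hd := ih.deriv
      (Eventually.of_forall (fun M => (entire_iteratedDeriv (hS M) n).differentiableOn))
      isOpen_univ
    rw [tendstoLocallyUniformlyOn_univ] at hd
    simpa [iteratedDeriv_succ, Function.comp_def] using hd

lemma iteratedDeriv_iteratedDeriv' (f : ℂ → ℂ) (n k : ℕ) :
    iteratedDeriv n (iteratedDeriv k f) = iteratedDeriv (n + k) f := by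
  simp only [iteratedDeriv_eq_iterate, Function.iterate_add_apply]

lemma taylor_bound {B : ℕ → ℝ} (hBpos : ∀ n, 0 < B n) (hBmono : Monotone B)
    {f : ℂ → ℂ} (hf : Differentiable ℂ f) {A : ℝ} (hA : 0 ≤ A)
    (hf0 : ∀ n, ‖iteratedDeriv n f 0‖ ≤ A / (n ! * B n)) (n : ℕ) (z : ℂ) :
    ‖iteratedDeriv n f z‖ ≤ A * Real.exp ‖z‖ / (n ! * B n) := by
  have hG := Complex.hasSum_taylorSeries_of_entire (entire_iteratedDeriv hf n) 0 z
  simp only [sub_zero, iteratedDeriv_iteratedDeriv'] at hG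
  set G : ℕ → ℂ := fun k => (k ! : ℂ)⁻¹ • z ^ k • iteratedDeriv (k + n) f 0 with hGdef
  have hDpos : ∀ m : ℕ, (0:ℝ) < m ! * B m := fun m => by
    have := hBpos m
    have : (0:ℝ) < (m ! : ℝ) := by exact_mod_cast Nat.factorial_pos m
    positivity
  have hnormG : ∀ k, ‖G k‖ ≤ A / (n ! * B n) * (‖z‖ ^ k / k !) := by
    intro k
    have h1 : ‖G k‖ = (k ! : ℝ)⁻¹ * (‖z‖ ^ k * ‖iteratedDeriv (k + n) f 0‖) := by
      rw [hGdef]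
      simp [norm_smul, norm_pow, Nat.abs_cast]
    rw [h1]
    have h2 : ‖iteratedDeriv (k + n) f 0‖ ≤ A / (n ! * B n) := by
      refine (hf0 (k + n)).trans ?_
      apply div_le_div_of_nonneg_left hA (hDpos n)
      have hfle : (n ! : ℝ) ≤ (k + n)! := by
        exact_mod_cast Nat.factorial_le (Nat.le_add_left n k)
      have hBle : B n ≤ B (k + n) := hBmono (Nat.le_add_left n k)
      have := (hBpos n).le
      have h0 : (0:ℝ) < (n ! : ℝ) := by exact_mod_cast Nat.factorial_pos n
      have hkn : (0:ℝ) < ((k+n)! : ℝ) := by exact_mod_cast Nat.factorial_pos (k+n)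
      nlinarith [hBpos (k+n)]
    have hkfac : (0:ℝ) < (k ! : ℝ) := by exact_mod_cast Nat.factorial_pos k
    calc (k ! : ℝ)⁻¹ * (‖z‖ ^ k * ‖iteratedDeriv (k + n) f 0‖)
        ≤ (k ! : ℝ)⁻¹ * (‖z‖ ^ k * (A / (n ! * B n))) := by
          gcongr
      _ = A / (n ! * B n) * (‖z‖ ^ k / k !) := by field_simp
  have hu : Summable (fun k : ℕ => A / (n ! * B n) * (‖z‖ ^ k / k !)) :=
    (Real.summable_pow_div_factorial ‖z‖).mul_left _
  have hGsum : Summable (fun k => ‖G k‖) :=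
    Summable.of_nonneg_of_le (fun k => norm_nonneg _) hnormG hu
  have h3 : ‖iteratedDeriv n f z‖ ≤ ∑' k, ‖G k‖ := by
    rw [← hG.tsum_eq]
    exact norm_tsum_le_tsum_norm hGsum
  have h4 : ∑' k, ‖G k‖ ≤ ∑' k, A / (n ! * B n) * (‖z‖ ^ k / k !) :=
    Summable.tsum_le_tsum hnormG hGsum hu
  have h5 : ∑' k : ℕ, A / (n ! * B n) * (‖z‖ ^ k / k !)
      = A / (n ! * B n) * ∑' k : ℕ, (‖z‖ ^ k / k !) := tsum_mul_left
  have h6 : ∑' k : ℕ, (‖z‖ ^ k / k ! : ℝ) ≤ Real.exp ‖z‖ := by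
    apply Summable.tsum_le_of_sum_range_le (Real.summable_pow_div_factorial ‖z‖)
    intro m
    exact Real.sum_le_exp_of_nonneg (norm_nonneg z) m
  have hApos : 0 ≤ A / (n ! * B n) := div_nonneg hA (hDpos n).le
  calc ‖iteratedDeriv n f z‖ ≤ A / (n ! * B n) * ∑' k : ℕ, (‖z‖ ^ k / k !) := by
        rw [← h5]; exact h3.trans h4
    _ ≤ A / (n ! * B n) * Real.exp ‖z‖ := by
        exact mul_le_mul_of_nonneg_left h6 hApos
    _ = A * Real.exp ‖z‖ / (n ! * B n) := by ring




lemma psPrec_elim {B : ℕ → ℝ} {phi : PowerSeries ℂ} (h : psPrec B phi) :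
    ∃ c : ℝ, 0 < c ∧ ∃ e : ℝ, 0 ≤ e ∧ ∀ n : ℕ,
      ‖(PowerSeries.coeff n) phi‖ ≤ c * (1 + (n : ℝ)) ^ e * B n := by
  obtain ⟨c, hc, e, he, hb⟩ := h
  refine ⟨c, hc, e, he, fun n => ?_⟩
  have h1 := hb n
  rw [norm_mul, Complex.norm_natCast] at h1
  have hfac : (0:ℝ) < (n ! : ℝ) := by exact_mod_cast Nat.factorial_pos n
  have h2 : (n ! : ℝ) * ‖(PowerSeries.coeff n) phi‖ <
      (n ! : ℝ) * (c * (1 + (n : ℝ)) ^ e * B n) := by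
    calc (n ! : ℝ) * ‖(PowerSeries.coeff n) phi‖
        < c * (1 + (n : ℝ)) ^ e * ((n ! : ℝ) * B n) := h1
      _ = (n ! : ℝ) * (c * (1 + (n : ℝ)) ^ e * B n) := by ring
  exact (lt_of_mul_lt_mul_left h2 hfac.le).le

lemma psPrec_intro {B : ℕ → ℝ} (hBpos : ∀ n, 0 < B n) {phi : PowerSeries ℂ}
    {K E : ℝ} (hK : 0 ≤ K) (hE : 0 ≤ E)
    (h : ∀ n, ‖(PowerSeries.coeff n) phi‖ ≤ K * (1 + (n : ℝ)) ^ E * B n) :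
    psPrec B phi := by
  refine ⟨K + 1, by linarith, E, hE, fun n => ?_⟩
  rw [norm_mul, Complex.norm_natCast]
  have hfac : (0:ℝ) < (n ! : ℝ) := by exact_mod_cast Nat.factorial_pos n
  have hr : (0:ℝ) < (1 + (n : ℝ)) ^ E := Real.rpow_pos_of_pos (by positivity) E
  have hBn := hBpos n
  calc (n ! : ℝ) * ‖(PowerSeries.coeff n) phi‖
      ≤ (n ! : ℝ) * (K * (1 + (n : ℝ)) ^ E * B n) := by
        exact mul_le_mul_of_nonneg_left (h n) hfac.le
    _ = K * (1 + (n : ℝ)) ^ E * ((n ! : ℝ) * B n) := by ring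
    _ < (K + 1) * (1 + (n : ℝ)) ^ E * ((n ! : ℝ) * B n) := by
        nlinarith [mul_pos hr (mul_pos hfac hBn)]

lemma psPrec_mul {B : ℕ → ℝ} (hBpos : ∀ n, 0 < B n) (hBmono : Monotone B)
    (hBsub : ∀ m n : ℕ, B m * B n ≤ B 0 * B (m + n))
    {phi psi : PowerSeries ℂ} (h1 : psPrec B phi) (h2 : psPrec B psi) :
    psPrec B (phi * psi) := by
  obtain ⟨c1, hc1, e1, he1, hb1⟩ := psPrec_elim h1
  obtain ⟨c2, hc2, e2, he2, hb2⟩ := psPrec_elim h2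
  apply psPrec_intro hBpos (K := c1 * c2 * B 0) (E := e1 + e2 + 1)
    (mul_nonneg (mul_nonneg hc1.le hc2.le) (hBpos 0).le) (by positivity)
  intro n
  rw [PowerSeries.coeff_mul]
  have hn1 : (0:ℝ) < 1 + (n:ℝ) := by positivity
  have key : ∀ p ∈ Finset.HasAntidiagonal.antidiagonal n,
      ‖(PowerSeries.coeff p.1) phi * (PowerSeries.coeff p.2) psi‖ ≤
        c1 * c2 * B 0 * (1 + (n : ℝ)) ^ (e1 + e2) * B n := by
    rintro ⟨i, j⟩ hp
    rw [Finset.HasAntidiagonal.mem_antidiagonal] at hp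
    have hi : i ≤ n := by omega
    have hj : j ≤ n := by omega
    rw [norm_mul]
    have hbi : ‖(PowerSeries.coeff i) phi‖ ≤ c1 * (1 + (n : ℝ)) ^ e1 * B i := by
      refine (hb1 i).trans ?_
      have ht : (1 + (i:ℝ)) ^ e1 ≤ (1 + (n:ℝ)) ^ e1 :=
        Real.rpow_le_rpow (by positivity) (add_le_add_right (by exact_mod_cast hi) 1) he1
      exact mul_le_mul_of_nonneg_right (mul_le_mul_of_nonneg_left ht hc1.le) (hBpos i).le
    have hbj : ‖(PowerSeries.coeff j) psi‖ ≤ c2 * (1 + (n : ℝ)) ^ e2 * B j := by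
      refine (hb2 j).trans ?_
      have ht : (1 + (j:ℝ)) ^ e2 ≤ (1 + (n:ℝ)) ^ e2 :=
        Real.rpow_le_rpow (by positivity) (add_le_add_right (by exact_mod_cast hj) 1) he2
      exact mul_le_mul_of_nonneg_right (mul_le_mul_of_nonneg_left ht hc2.le) (hBpos j).le
    calc ‖(PowerSeries.coeff i) phi‖ * ‖(PowerSeries.coeff j) psi‖
        ≤ (c1 * (1 + (n : ℝ)) ^ e1 * B i) * (c2 * (1 + (n : ℝ)) ^ e2 * B j) := by
          exact mul_le_mul hbi hbj (norm_nonneg _)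
            (mul_nonneg (mul_nonneg hc1.le (Real.rpow_pos_of_pos hn1 e1).le) (hBpos i).le)
      _ = c1 * c2 * ((1 + (n : ℝ)) ^ e1 * (1 + (n : ℝ)) ^ e2) * (B i * B j) := by ring
      _ ≤ c1 * c2 * ((1 + (n : ℝ)) ^ e1 * (1 + (n : ℝ)) ^ e2) * (B 0 * B n) := by
          have hBij := hBsub i j
          rw [hp] at hBij
          exact mul_le_mul_of_nonneg_left hBij
            (mul_nonneg (mul_nonneg hc1.le hc2.le)
              (mul_pos (Real.rpow_pos_of_pos hn1 e1) (Real.rpow_pos_of_pos hn1 e2)).le)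
      _ = c1 * c2 * B 0 * (1 + (n : ℝ)) ^ (e1 + e2) * B n := by
          rw [← Real.rpow_add hn1]; ring
  calc ‖∑ p ∈ Finset.HasAntidiagonal.antidiagonal n, (PowerSeries.coeff p.1) phi * (PowerSeries.coeff p.2) psi‖
      ≤ ∑ p ∈ Finset.HasAntidiagonal.antidiagonal n, ‖(PowerSeries.coeff p.1) phi * (PowerSeries.coeff p.2) psi‖ :=
        norm_sum_le _ _
    _ ≤ ∑ _p ∈ Finset.HasAntidiagonal.antidiagonal n, c1 * c2 * B 0 * (1 + (n : ℝ)) ^ (e1 + e2) * B n :=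
        Finset.sum_le_sum key
    _ = (n + 1 : ℝ) * (c1 * c2 * B 0 * (1 + (n : ℝ)) ^ (e1 + e2) * B n) := by
        rw [Finset.sum_const, Finset.Nat.card_antidiagonal]; push_cast; ring
    _ ≤ c1 * c2 * B 0 * (1 + (n : ℝ)) ^ (e1 + e2 + 1) * B n := by
        rw [Real.rpow_add_one hn1.ne']
        have : (n + 1 : ℝ) = 1 + (n : ℝ) := by ring
        rw [this]
        apply le_of_eq; ring

section Step

variable {B : ℕ → ℝ} (hBpos : ∀ n, 0 < B n) (hBmono : Monotone B)
  (hBsub : ∀ m n : ℕ, B m * B n ≤ B 0 * B (m + n))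
  {a : ℕ → ℂ} {c e : ℝ} (hc : 0 < c) (he : 0 ≤ e)
  (ha : ∀ n, ‖a n‖ ≤ c * (1 + (n:ℝ)) ^ e * B n)

include hBpos in
lemma facB_pos (n : ℕ) : (0:ℝ) < n ! * B n := by
  have h1 : (0:ℝ) < (n ! : ℝ) := by exact_mod_cast Nat.factorial_pos n
  have := hBpos n; positivity

include hBpos hBmono hc he ha in
/-- Term bound on compact sets. -/
lemma term_bound {A : ℝ} (hA : 0 ≤ A) {f : ℂ → ℂ} (hf : Differentiable ℂ f)
    (hf0 : ∀ n, ‖iteratedDeriv n f 0‖ ≤ A / (n ! * B n)) {R : ℝ} (hR : 0 ≤ R)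
    (n : ℕ) (z : ℂ) (hz : z ∈ closedBall (0:ℂ) R) :
    ‖a n * iteratedDeriv n f z‖ ≤ c * A * Real.exp R * ((1 + (n:ℝ)) ^ e / n !) := by
  rw [norm_mul]
  have h1 := taylor_bound hBpos hBmono hf hA hf0 n z
  have h2 : ‖iteratedDeriv n f z‖ ≤ A * Real.exp R / (n ! * B n) := by
    refine h1.trans ?_
    have hz' : ‖z‖ ≤ R := by simpa using mem_closedBall_zero_iff.1 hz
    have hexp := Real.exp_le_exp.2 hz'
    have hden := facB_pos hBpos n
    gcongr
  calc ‖a n‖ * ‖iteratedDeriv n f z‖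
      ≤ (c * (1 + (n:ℝ)) ^ e * B n) * (A * Real.exp R / (n ! * B n)) := by
        exact mul_le_mul (ha n) h2 (norm_nonneg _)
          (mul_nonneg (mul_nonneg hc.le (Real.rpow_pos_of_pos (by positivity) e).le) (hBpos n).le)
    _ = c * A * Real.exp R * ((1 + (n:ℝ)) ^ e / n !) := by
        have h3 := (hBpos n).ne'
        have h4 : ((n !:ℝ)) ≠ 0 := by exact_mod_cast (Nat.factorial_pos n).ne'
        field_simp

include hBpos hBmono hc he ha in
lemma step_conv {A : ℝ} (hA : 0 ≤ A) {f : ℂ → ℂ} (hf : Differentiable ℂ f)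
    (hf0 : ∀ n, ‖iteratedDeriv n f 0‖ ≤ A / (n ! * B n)) :
    TendstoLocallyUniformly
      (fun N z => ∑ n ∈ Finset.range N, a n * iteratedDeriv n f z)
      (fun z => ∑' n, a n * iteratedDeriv n f z) Filter.atTop := by
  rw [tendstoLocallyUniformly_iff_forall_isCompact]
  intro K hK
  obtain ⟨R, hR0, hKR⟩ := hK.isBounded.subset_closedBall_lt 0 0
  have hu : Summable (fun n : ℕ => c * A * Real.exp R * ((1 + (n:ℝ)) ^ e / n !)) :=
    (summable_rpow_div_factorial he).mul_left _
  exact (tendstoUniformlyOn_tsum_nat hu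
    (fun n z hz => term_bound hBpos hBmono hc he ha hA hf hf0 hR0.le n z hz)).mono hKR

include hBpos hBmono hc he ha in
lemma step_diff {A : ℝ} (hA : 0 ≤ A) {f : ℂ → ℂ} (hf : Differentiable ℂ f)
    (hf0 : ∀ n, ‖iteratedDeriv n f 0‖ ≤ A / (n ! * B n)) :
    Differentiable ℂ (fun z => ∑' n, a n * iteratedDeriv n f z) :=
  diff_of_tlu
    (fun N => Differentiable.fun_sum (fun i _ =>
      (entire_iteratedDeriv hf i).const_mul (a i)))
    (step_conv hBpos hBmono hc he ha hA hf hf0)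

include hBpos hBmono hBsub hc he ha in
lemma step_bound {A : ℝ} (hA : 0 ≤ A) {f : ℂ → ℂ} (hf : Differentiable ℂ f)
    (hf0 : ∀ n, ‖iteratedDeriv n f 0‖ ≤ A / (n ! * B n)) (n : ℕ) :
    ‖iteratedDeriv n (fun z => ∑' k, a k * iteratedDeriv k f z) 0‖ ≤
      (c * B 0 * (∑' k : ℕ, (1 + (k:ℝ)) ^ e / k !)) * A / (n ! * B n) := by
  have hSdiff : ∀ N, Differentiable ℂ
      (fun z => ∑ k ∈ Finset.range N, a k * iteratedDeriv k f z) :=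
    fun N => Differentiable.fun_sum (fun i _ => (entire_iteratedDeriv hf i).const_mul (a i))
  have hconv := step_conv hBpos hBmono hc he ha hA hf hf0
  have hd := tlu_iteratedDeriv hSdiff hconv n
  rw [← tendstoLocallyUniformlyOn_univ] at hd
  have hpt := (hd.tendsto_at (Set.mem_univ (0:ℂ))).norm
  -- identify the partial-sum derivatives
  have hid : ∀ N, iteratedDeriv n (fun z => ∑ k ∈ Finset.range N, a k * iteratedDeriv k f z) 0
      = ∑ k ∈ Finset.range N, a k * iteratedDeriv (n + k) f 0 := by
    intro N
    rw [iteratedDeriv_finsum (Finset.range N) (fun k z => a k * iteratedDeriv k f z)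
      (fun k => (entire_iteratedDeriv hf k).const_mul (a k)) n]
    refine Finset.sum_congr rfl (fun k _ => ?_)
    rw [iteratedDeriv_cmul (entire_iteratedDeriv hf k) (a k) n,
      iteratedDeriv_iteratedDeriv']
  -- bound each partial sum
  have hkey : ∀ k : ℕ, ‖a k * iteratedDeriv (n + k) f 0‖ ≤
      (c * B 0 * A / (n ! * B n)) * ((1 + (k:ℝ)) ^ e / k !) := by
    intro k
    rw [norm_mul]
    have h1 : ‖iteratedDeriv (n + k) f 0‖ ≤ A / ((n + k)! * B (n + k)) := hf0 (n + k)
    have hfk : (n ! : ℝ) * k ! ≤ ((n + k)! : ℝ) := by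
      exact_mod_cast Nat.le_of_dvd (Nat.factorial_pos (n+k)) (Nat.factorial_mul_factorial_dvd_factorial_add n k)
    have hBnk := hBsub n k
    have hBn := hBpos n
    have hBk := hBpos k
    have hB0 := hBpos 0
    have hnf : (0:ℝ) < (n ! : ℝ) := by exact_mod_cast Nat.factorial_pos n
    have hkf : (0:ℝ) < (k ! : ℝ) := by exact_mod_cast Nat.factorial_pos k
    have hnkf : (0:ℝ) < ((n+k)! : ℝ) := by exact_mod_cast Nat.factorial_pos (n+k)
    have h2 : A / ((n + k)! * B (n + k)) ≤ A * B 0 / (n ! * k ! * (B n * B k)) := by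
      rw [div_le_div_iff₀ (facB_pos hBpos (n+k)) (by positivity)]
      have h3 : (n !:ℝ) * k ! * (B n * B k) ≤ ((n+k)! : ℝ) * (B 0 * B (n+k)) :=
        mul_le_mul hfk hBnk (by positivity) hnkf.le
      calc A * ((n !:ℝ) * k ! * (B n * B k))
          ≤ A * (((n+k)! : ℝ) * (B 0 * B (n+k))) := mul_le_mul_of_nonneg_left h3 hA
        _ = A * B 0 * (((n+k)! : ℝ) * B (n+k)) := by ring
    calc ‖a k‖ * ‖iteratedDeriv (n + k) f 0‖
        ≤ (c * (1 + (k:ℝ)) ^ e * B k) * (A * B 0 / (n ! * k ! * (B n * B k))) := by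
          exact mul_le_mul (ha k) (h1.trans h2) (norm_nonneg _)
            (mul_nonneg (mul_nonneg hc.le (Real.rpow_pos_of_pos (by positivity) e).le) hBk.le)
      _ = (c * B 0 * A / (n ! * B n)) * ((1 + (k:ℝ)) ^ e / k !) := by
          field_simp
  -- bound the partial sums
  set S : ℝ := ∑' k : ℕ, (1 + (k:ℝ)) ^ e / k ! with hSdef
  have hSnn : 0 ≤ S := tsum_nonneg (fun k => by positivity)
  have hCnn : 0 ≤ c * B 0 * A / (n ! * B n) :=
    div_nonneg (mul_nonneg (mul_nonneg hc.le (hBpos 0).le) hA) (facB_pos hBpos n).le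
  have hps : ∀ N, ‖∑ k ∈ Finset.range N, a k * iteratedDeriv (n + k) f 0‖ ≤
      (c * B 0 * A / (n ! * B n)) * S := by
    intro N
    calc ‖∑ k ∈ Finset.range N, a k * iteratedDeriv (n + k) f 0‖
        ≤ ∑ k ∈ Finset.range N, ‖a k * iteratedDeriv (n + k) f 0‖ := norm_sum_le _ _
      _ ≤ ∑ k ∈ Finset.range N, (c * B 0 * A / (n ! * B n)) * ((1 + (k:ℝ)) ^ e / k !) :=
          Finset.sum_le_sum (fun k _ => hkey k)
      _ = (c * B 0 * A / (n ! * B n)) * ∑ k ∈ Finset.range N, ((1 + (k:ℝ)) ^ e / k !) := by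
          rw [Finset.mul_sum]
      _ ≤ (c * B 0 * A / (n ! * B n)) * S := by
          apply mul_le_mul_of_nonneg_left ?_ hCnn
          exact Summable.sum_le_tsum (Finset.range N) (fun k _ => by positivity)
            (summable_rpow_div_factorial he)
  have hfinal : ‖iteratedDeriv n (fun z => ∑' k, a k * iteratedDeriv k f z) 0‖ ≤
      (c * B 0 * A / (n ! * B n)) * S := by
    apply le_of_tendsto' hpt
    intro N
    rw [hid N]
    exact hps N
  calc ‖iteratedDeriv n (fun z => ∑' k, a k * iteratedDeriv k f z) 0‖
      ≤ (c * B 0 * A / (n ! * B n)) * S := hfinal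
    _ = (c * B 0 * S) * A / (n ! * B n) := by ring

lemma tuo_cmul {F : ℕ → ℂ → ℂ} {f : ℂ → ℂ} {s : Set ℂ} (c0 : ℂ)
    (h : TendstoUniformlyOn F f Filter.atTop s) :
    TendstoUniformlyOn (fun N z => c0 * F N z) (fun z => c0 * f z) Filter.atTop s := by
  rcases eq_or_ne c0 0 with rfl | hc0
  · simp only [zero_mul]
    rw [Metric.tendstoUniformlyOn_iff]
    intro ε hε
    exact Filter.Eventually.of_forall (fun N z _ => by simpa using hε)
  · rw [Metric.tendstoUniformlyOn_iff] at h ⊢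
    intro ε hε
    have hc0' : 0 < ‖c0‖ := norm_pos_iff.2 hc0
    filter_upwards [h (ε / ‖c0‖) (by positivity)] with N hN z hz
    have := hN z hz
    rw [dist_eq_norm] at this ⊢
    rw [← mul_sub, norm_mul]
    calc ‖c0‖ * ‖f z - F N z‖ < ‖c0‖ * (ε / ‖c0‖) :=
          mul_lt_mul_of_pos_left this hc0'
      _ = ε := mul_div_cancel₀ ε hc0'.ne'


include hBpos hBmono hc he ha in
lemma stepN_conv {A : ℝ} (hA : 0 ≤ A) {F : ℕ → ℂ → ℂ} {f : ℂ → ℂ}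
    (hFd : ∀ N, Differentiable ℂ (F N)) (hfd : Differentiable ℂ f)
    (hF0 : ∀ N n, ‖iteratedDeriv n (F N) 0‖ ≤ A / (n ! * B n))
    (hf0 : ∀ n, ‖iteratedDeriv n f 0‖ ≤ A / (n ! * B n))
    (hFconv : TendstoLocallyUniformly F f Filter.atTop) :
    TendstoLocallyUniformly (fun N z => ∑' k, a k * iteratedDeriv k (F N) z)
      (fun z => ∑' k, a k * iteratedDeriv k f z) Filter.atTop := by
  rw [tendstoLocallyUniformly_iff_forall_isCompact]
  intro K hK
  obtain ⟨R, hR0, hKR⟩ := hK.isBounded.subset_closedBall_lt 0 0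
  have hu : Summable (fun n : ℕ => c * A * Real.exp R * ((1 + (n:ℝ)) ^ e / n !)) :=
    (summable_rpow_div_factorial he).mul_left _
  refine (tendstoUniformlyOn_tsum_of_tendsto hu
    (h := fun N n z => a n * iteratedDeriv n (F N) z)
    (g := fun n z => a n * iteratedDeriv n f z)
    (fun N n z hz => term_bound hBpos hBmono hc he ha hA (hFd N) (hF0 N) hR0.le n z hz)
    (fun n z hz => term_bound hBpos hBmono hc he ha hA hfd hf0 hR0.le n z hz)
    (fun n => ?_)).mono hKR
  apply tuo_cmul
  exact (tendstoLocallyUniformly_iff_forall_isCompact.1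
    (tlu_iteratedDeriv hFd hFconv n)) _ (isCompact_closedBall 0 R)

end Step

/-- Corollary to Lemma 3.2: under the hypotheses of Lemma 3.2, for every `m ≥ 1` one has
`phi^m ≺ ⟨n!Bₙ⟩`, all `f_N` and `f` belong to `dom phi(D)^m`, and
`phi(D)^m f_N → phi(D)^m f` uniformly on compact subsets of `ℂ`. -/
theorem stmt9 (B : ℕ → ℝ) (hBpos : ∀ n, 0 < B n) (hBmono : Monotone B)
    (hBsub : ∀ m n : ℕ, B m * B n ≤ B 0 * B (m + n))
    (phi : PowerSeries ℂ) (hphi : psPrec B phi)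
    (f : ℂ → ℂ) (hf : Differentiable ℂ f)
    (F : ℕ → ℂ → ℂ) (hFdiff : ∀ N, Differentiable ℂ (F N))
    (hFll : ∀ N n, ‖iteratedDeriv n (F N) 0‖ < ((n ! : ℝ) * B n)⁻¹)
    (hFconv : TendstoLocallyUniformly F f Filter.atTop) :
    ∀ m : ℕ, 1 ≤ m →
      psPrec B (phi ^ m) ∧
      ∃ (G : ℕ → ℂ → ℂ) (g : ℂ → ℂ),
        (∀ N, domIter phi m (F N) (G N)) ∧ domIter phi m f g ∧
        TendstoLocallyUniformly G g Filter.atTop := by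
  obtain ⟨c, hc, e, he, ha⟩ := psPrec_elim hphi
  set S : ℝ := ∑' k : ℕ, (1 + (k:ℝ)) ^ e / k ! with hSdef
  set C0 : ℝ := c * B 0 * S with hC0def
  have hSnn : 0 ≤ S := tsum_nonneg (fun k => by positivity)
  have hC0nn : 0 ≤ C0 := mul_nonneg (mul_nonneg hc.le (hBpos 0).le) hSnn
  set Φ : (ℂ → ℂ) → (ℂ → ℂ) :=
    fun g z => ∑' k, (PowerSeries.coeff k) phi * iteratedDeriv k g z with hΦdef
  -- base bounds
  have base_F : ∀ N n, ‖iteratedDeriv n (F N) 0‖ ≤ 1 / (n ! * B n) := by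
    intro N n
    have := (hFll N n).le
    rwa [inv_eq_one_div] at this
  have base_f : ∀ n, ‖iteratedDeriv n f 0‖ ≤ 1 / (n ! * B n) := by
    intro n
    have htlu := tlu_iteratedDeriv hFdiff hFconv n
    rw [← tendstoLocallyUniformlyOn_univ] at htlu
    have ht := (htlu.tendsto_at (Set.mem_univ (0:ℂ))).norm
    exact le_of_tendsto' ht (fun N => base_F N n)
  -- the iterated invariants
  have iter : ∀ k : ℕ,
      (∀ N, Differentiable ℂ (Φ^[k] (F N)) ∧
        ∀ n, ‖iteratedDeriv n (Φ^[k] (F N)) 0‖ ≤ C0 ^ k / (n ! * B n)) ∧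
      (Differentiable ℂ (Φ^[k] f) ∧
        ∀ n, ‖iteratedDeriv n (Φ^[k] f) 0‖ ≤ C0 ^ k / (n ! * B n)) := by
    intro k
    induction k with
    | zero =>
      refine ⟨fun N => ⟨by simpa using hFdiff N, fun n => ?_⟩, by simpa using hf, fun n => ?_⟩
      · simpa using base_F N n
      · simpa using base_f n
    | succ k ih =>
      obtain ⟨ihF, ihf1, ihf2⟩ := ih
      have hAnn : (0:ℝ) ≤ C0 ^ k := pow_nonneg hC0nn k
      constructor
      · intro N
        obtain ⟨hd, hb⟩ := ihF N
        rw [Function.iterate_succ_apply']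
        constructor
        · exact step_diff hBpos hBmono hc he ha hAnn hd hb
        · intro n
          have := step_bound hBpos hBmono hBsub hc he ha hAnn hd hb n
          refine this.trans (le_of_eq ?_)
          rw [pow_succ]; ring
      · rw [Function.iterate_succ_apply']
        constructor
        · exact step_diff hBpos hBmono hc he ha hAnn ihf1 ihf2
        · intro n
          have := step_bound hBpos hBmono hBsub hc he ha hAnn ihf1 ihf2 n
          refine this.trans (le_of_eq ?_)
          rw [pow_succ]; ring
  -- iterated convergence
  have iterconv : ∀ k : ℕ,
      TendstoLocallyUniformly (fun N => Φ^[k] (F N)) (Φ^[k] f) Filter.atTop := by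
    intro k
    induction k with
    | zero => simpa using hFconv
    | succ k ih =>
      have hAnn : (0:ℝ) ≤ C0 ^ k := pow_nonneg hC0nn k
      obtain ⟨ihF, ihf1, ihf2⟩ := iter k
      have := stepN_conv hBpos hBmono hc he ha hAnn
        (fun N => (ihF N).1) ihf1 (fun N => (ihF N).2) ihf2 ih
      simp only [Function.iterate_succ_apply']
      exact this
  -- domSeq steps
  have hdom : ∀ (g : ℂ → ℂ) (k : ℕ), Differentiable ℂ g →
      (∀ n, ‖iteratedDeriv n g 0‖ ≤ C0 ^ k / (n ! * B n)) →
      domSeq phi g (Φ g) := by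
    intro g k hd hb
    exact step_conv hBpos hBmono hc he ha (pow_nonneg hC0nn k) hd hb
  intro m hm
  constructor
  · -- psPrec B (phi ^ m)
    induction m, hm using Nat.le_induction with
    | base => simpa [pow_one] using hphi
    | succ n hn ih => rw [pow_succ]; exact psPrec_mul hBpos hBmono hBsub ih hphi
  · refine ⟨fun N => Φ^[m] (F N), Φ^[m] f, fun N => ?_, ?_, iterconv m⟩
    · refine ⟨fun k => Φ^[k] (F N), by simp, fun k hk => ?_, rfl⟩
      obtain ⟨hd, hb⟩ := (iter k).1 N
      have := hdom (Φ^[k] (F N)) k hd hb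
      rwa [← Function.iterate_succ_apply' Φ k (F N)] at this
    · refine ⟨fun k => Φ^[k] f, by simp, fun k hk => ?_, rfl⟩
      obtain ⟨_, hd, hb⟩ := iter k
      have := hdom (Φ^[k] f) k hd hb
      rwa [← Function.iterate_succ_apply' Φ k f] at this
end
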